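/- arXiv:2210.11586 — 14 statements merged into one kernel-verified Lean document; each statement's English description precedes it below -/
import Mathlib

section
/- Let ε, δ, r ∈ ℝ and I₁ > 0. Let Ω, W : ℝ → ℝ³ be continuous and let Ω₁, Γ : ℝ → ℝ³ be differentiable curves satisfying: (i) I₁ Ω̇₁(t) = I₁ Ω₁(t) × Ω(t) + r Γ(t) × W(t) (law of change of angular momentum of the ball, with reaction force resultant W); (ii) Γ̇(t) = ε Γ(t) × Ω(t); and (iii) the rolling constraint Ω₁(t) × Γ(t) = δ Ω(t) × Γ(t) for all t. Then the function t ↦ ⟨Ω₁(t), Γ(t)⟩ is constant. -/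
open Matrix

/-- For a ball of the spherical ball bearing problem, with angular
momentum equation `I₁ Ω̇₁ = I₁ Ω₁ × Ω + r Γ × W` (with reaction force resultant `W`),
kinematic equation `Γ̇ = ε Γ × Ω`, and rolling constraint `Ω₁ × Γ = δ Ω × Γ`, the
quantity `⟨Ω₁(t), Γ(t)⟩` is a first integral. -/
theorem spherical_ball_bearing_ball_spin_constant
    (ε δ r I₁ : ℝ) (hI₁ : 0 < I₁)
    (Ω W Ω₁ Γ Ω₁' : ℝ → Fin 3 → ℝ)
    (hΩ : Continuous Ω) (hW : Continuous W)
    (hΩ₁ : ∀ t : ℝ, HasDerivAt Ω₁ (Ω₁' t) t)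
    (hmom : ∀ t : ℝ, I₁ • Ω₁' t = I₁ • (Ω₁ t ⨯₃ Ω t) + r • (Γ t ⨯₃ W t))
    (hΓ : ∀ t : ℝ, HasDerivAt Γ (ε • (Γ t ⨯₃ Ω t)) t)
    (hconstr : ∀ t : ℝ, Ω₁ t ⨯₃ Γ t = δ • (Ω t ⨯₃ Γ t)) :
    ∀ s t : ℝ, Ω₁ s ⬝ᵥ Γ s = Ω₁ t ⬝ᵥ Γ t := by
  have key : ∀ t : ℝ, HasDerivAt (fun t => Ω₁ t ⬝ᵥ Γ t) 0 t := by
    intro t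
    have h1 : ∀ i, HasDerivAt (fun t => Ω₁ t i) (Ω₁' t i) t := fun i =>
      (hasDerivAt_pi.mp (hΩ₁ t)) i
    have h2 : ∀ i, HasDerivAt (fun t => Γ t i) ((ε • (Γ t ⨯₃ Ω t)) i) t := fun i =>
      (hasDerivAt_pi.mp (hΓ t)) i
    have h3 : HasDerivAt (fun t => Ω₁ t ⬝ᵥ Γ t)
        (∑ i, (Ω₁' t i * Γ t i + Ω₁ t i * (ε • (Γ t ⨯₃ Ω t)) i)) t := by
      simpa [dotProduct] using
        HasDerivAt.fun_sum (fun i _ => (h1 i).mul (h2 i))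
    convert h3 using 1
    have hm0 := congrFun (hmom t) 0
    have hm1 := congrFun (hmom t) 1
    have hm2 := congrFun (hmom t) 2
    have hc0 := congrFun (hconstr t) 0
    have hc1 := congrFun (hconstr t) 1
    have hc2 := congrFun (hconstr t) 2
    simp only [cross_apply, Matrix.cons_val_zero, Matrix.cons_val_one, Matrix.head_cons,
      Matrix.cons_val_two, Matrix.tail_cons, Pi.add_apply, Pi.smul_apply, smul_eq_mul,
      Fin.sum_univ_three] at hm0 hm1 hm2 hc0 hc1 hc2 ⊢
    refine mul_left_cancel₀ hI₁.ne' ?_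
    linear_combination (-(Γ t 0)) * hm0 - (Γ t 1) * hm1 - (Γ t 2) * hm2
      - I₁ * (ε - 1) * (Ω t 0 * hc0 + Ω t 1 * hc1 + Ω t 2 * hc2)
  intro s t
  exact is_const_of_deriv_eq_zero (fun x => (key x).differentiableAt)
    (fun x => (key x).deriv) s t
end

section
/- Fix n ≥ 1, ε ∈ ℝ, A, B, C > 0, reals D₁, …, D_n and d₁, …, d_n, and set 𝕀 = diag(A, B, C). Let Ω, Γ₁, …, Γ_n : ℝ → ℝ³ be differentiable curves with |Γ_i(t)| = 1 for all i, t, and define M(t) = 𝕀Ω(t) + Σ_{i=1}^n D_i (Ω(t) − ⟨Γ_i(t), Ω(t)⟩ Γ_i(t)) and N(t) = Σ_{i=1}^n d_i Γ_i(t). If the curves satisfy the reduced equations Ṁ(t) = M(t) × Ω(t) + (1 − ε) N(t) × Ω(t) and Γ̇_i(t) = ε Γ_i(t) × Ω(t), then the energy F₁ = ½ ⟨M(t), Ω(t)⟩ is constant in t. -/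
open Matrix

private lemma cross_dot_right (v w : Fin 3 → ℝ) : (v ⨯₃ w) ⬝ᵥ w = 0 := by
  rw [dotProduct_comm]; exact dot_cross_self v w

private lemma sum_dot {ι : Type*} (s : Finset ι) (f : ι → Fin 3 → ℝ) (v : Fin 3 → ℝ) :
    (∑ i ∈ s, f i) ⬝ᵥ v = ∑ i ∈ s, f i ⬝ᵥ v := by
  simp only [dotProduct, Finset.sum_apply, Finset.sum_mul]
  exact Finset.sum_comm

private lemma dot_hasDerivAt {u v : ℝ → Fin 3 → ℝ} {u₀ v₀ : Fin 3 → ℝ} {t : ℝ}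
    (hu : HasDerivAt u u₀ t) (hv : HasDerivAt v v₀ t) :
    HasDerivAt (fun s => u s ⬝ᵥ v s) (u₀ ⬝ᵥ v t + u t ⬝ᵥ v₀) t := by
  have hu' := hasDerivAt_pi.mp hu
  have hv' := hasDerivAt_pi.mp hv
  have h : HasDerivAt (fun s => ∑ j : Fin 3, u s j * v s j)
      (∑ j : Fin 3, (u₀ j * v t j + u t j * v₀ j)) t :=
    HasDerivAt.fun_sum (fun j _ => (hu' j).mul (hv' j))
  simpa only [dotProduct, Finset.sum_add_distrib] using h

private lemma mulVec_hasDerivAt (A : Matrix (Fin 3) (Fin 3) ℝ) {u : ℝ → Fin 3 → ℝ}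
    {u₀ : Fin 3 → ℝ} {t : ℝ} (hu : HasDerivAt u u₀ t) :
    HasDerivAt (fun s => A.mulVec (u s)) (A.mulVec u₀) t := by
  rw [hasDerivAt_pi]
  intro j
  have h : HasDerivAt (fun s => ∑ k : Fin 3, A j k * u s k)
      (∑ k : Fin 3, A j k * u₀ k) t :=
    HasDerivAt.fun_sum (fun k _ => (hasDerivAt_pi.mp hu k).const_mul (A j k))
  simpa only [Matrix.mulVec, dotProduct] using h

private lemma diag_symm (w x y : Fin 3 → ℝ) :
    (Matrix.diagonal w).mulVec x ⬝ᵥ y = (Matrix.diagonal w).mulVec y ⬝ᵥ x := by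
  simp only [dotProduct, Matrix.mulVec_diagonal]
  exact Finset.sum_congr rfl fun j _ => by ring

/-- For the reduced spherical ball bearing system with `n` balls,
`Ṁ = M × Ω + (1 − ε) N × Ω`, `Γ̇ᵢ = ε Γᵢ × Ω`, where
`M = 𝕀Ω + Σᵢ Dᵢ (Ω − ⟨Γᵢ, Ω⟩ Γᵢ)` and `N = Σᵢ dᵢ Γᵢ`, the energy
`F₁ = ½ ⟨M, Ω⟩` is a first integral. -/
theorem spherical_ball_bearing_energy_integral
    (n : ℕ) (hn : 1 ≤ n) (ε A B C : ℝ) (hA : 0 < A) (hB : 0 < B) (hC : 0 < C)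
    (D d : Fin n → ℝ)
    (Ω Ω' : ℝ → Fin 3 → ℝ) (Γ : Fin n → ℝ → Fin 3 → ℝ)
    (hΩ : ∀ t : ℝ, HasDerivAt Ω (Ω' t) t)
    (hunit : ∀ (i : Fin n) (t : ℝ), Γ i t ⬝ᵥ Γ i t = 1)
    (M N : ℝ → Fin 3 → ℝ)
    (hM : ∀ t : ℝ, M t = (Matrix.diagonal ![A, B, C]).mulVec (Ω t)
        + ∑ i : Fin n, D i • (Ω t - (Γ i t ⬝ᵥ Ω t) • Γ i t))
    (hN : ∀ t : ℝ, N t = ∑ i : Fin n, d i • Γ i t)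
    (hMdot : ∀ t : ℝ, HasDerivAt M (M t ⨯₃ Ω t + (1 - ε) • (N t ⨯₃ Ω t)) t)
    (hΓdot : ∀ (i : Fin n) (t : ℝ), HasDerivAt (Γ i) (ε • (Γ i t ⨯₃ Ω t)) t) :
    ∀ s t : ℝ, (1 / 2) * (M s ⬝ᵥ Ω s) = (1 / 2) * (M t ⬝ᵥ Ω t) := by
  set 𝕀 : Matrix (Fin 3) (Fin 3) ℝ := Matrix.diagonal ![A, B, C] with h𝕀
  -- first derivative computation, using hMdot
  have h1 : ∀ r : ℝ, HasDerivAt (fun s => M s ⬝ᵥ Ω s) (M r ⬝ᵥ Ω' r) r := by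
    intro r
    have h := dot_hasDerivAt (hMdot r) (hΩ r)
    simpa only [add_dotProduct, smul_dotProduct, cross_dot_right,
      smul_zero, add_zero, zero_add] using h
  -- second derivative computation, using the explicit formula for M
  have h2 : ∀ r : ℝ, HasDerivAt (fun s => M s ⬝ᵥ Ω s) (2 * (M r ⬝ᵥ Ω' r)) r := by
    intro r
    -- rewrite the energy as a scalar formula
    have hfg : (fun s => M s ⬝ᵥ Ω s)
        = fun s => 𝕀.mulVec (Ω s) ⬝ᵥ Ω s
            + ∑ i : Fin n, D i * (Ω s ⬝ᵥ Ω s - (Γ i s ⬝ᵥ Ω s) ^ 2) := by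
      funext s
      rw [hM s, add_dotProduct, sum_dot]
      congr 1
      exact Finset.sum_congr rfl fun i _ => by
        rw [smul_dotProduct, sub_dotProduct, smul_dotProduct,
          smul_eq_mul, smul_eq_mul, pow_two]
        try ring
    rw [hfg]
    -- derivative of the Γᵢ ⬝ Ω terms
    have hGdot : ∀ i : Fin n, HasDerivAt (fun s => Γ i s ⬝ᵥ Ω s) (Γ i r ⬝ᵥ Ω' r) r := by
      intro i
      have h := dot_hasDerivAt (hΓdot i r) (hΩ r)
      simpa only [smul_dotProduct, cross_dot_right, smul_zero, zero_add] using h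
    have hIdot : HasDerivAt (fun s => 𝕀.mulVec (Ω s) ⬝ᵥ Ω s)
        (𝕀.mulVec (Ω' r) ⬝ᵥ Ω r + 𝕀.mulVec (Ω r) ⬝ᵥ Ω' r) r :=
      dot_hasDerivAt (mulVec_hasDerivAt 𝕀 (hΩ r)) (hΩ r)
    have hsum : HasDerivAt
        (fun s => ∑ i : Fin n, D i * (Ω s ⬝ᵥ Ω s - (Γ i s ⬝ᵥ Ω s) ^ 2))
        (∑ i : Fin n, D i * ((Ω' r ⬝ᵥ Ω r + Ω r ⬝ᵥ Ω' r)
            - 2 * (Γ i r ⬝ᵥ Ω r) * (Γ i r ⬝ᵥ Ω' r))) r := by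
      apply HasDerivAt.fun_sum
      intro i _
      have hq : HasDerivAt (fun s => (Γ i s ⬝ᵥ Ω s) ^ 2)
          (2 * (Γ i r ⬝ᵥ Ω r) * (Γ i r ⬝ᵥ Ω' r)) r := by
        have h' := (hGdot i).fun_pow 2
        refine h'.congr_deriv ?_
        norm_num
      exact ((dot_hasDerivAt (hΩ r) (hΩ r)).sub hq).const_mul (D i)
    have htot := hIdot.add hsum
    have hval : 𝕀.mulVec (Ω' r) ⬝ᵥ Ω r + 𝕀.mulVec (Ω r) ⬝ᵥ Ω' r
        + ∑ i : Fin n, D i * ((Ω' r ⬝ᵥ Ω r + Ω r ⬝ᵥ Ω' r)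
            - 2 * (Γ i r ⬝ᵥ Ω r) * (Γ i r ⬝ᵥ Ω' r))
        = 2 * (M r ⬝ᵥ Ω' r) := by
      rw [hM r, add_dotProduct, sum_dot, diag_symm (![A, B, C]) (Ω' r) (Ω r),
        dotProduct_comm (Ω' r) (Ω r), mul_add, Finset.mul_sum]
      congr 1
      · ring
      · exact Finset.sum_congr rfl fun i _ => by
          rw [smul_dotProduct, sub_dotProduct, smul_dotProduct,
            smul_eq_mul, smul_eq_mul]
          ring
    rw [hval] at htot
    exact htot
  -- the derivative vanishes everywhere
  have hzero : ∀ r : ℝ, HasDerivAt (fun s => M s ⬝ᵥ Ω s) 0 r := by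
    intro r
    have he : M r ⬝ᵥ Ω' r = 2 * (M r ⬝ᵥ Ω' r) := (h1 r).unique (h2 r)
    have h0 : M r ⬝ᵥ Ω' r = 0 := by linarith
    simpa [h0] using h1 r
  intro s t
  have hconst := is_const_of_deriv_eq_zero
    (f := fun s => M s ⬝ᵥ Ω s)
    (fun r => (hzero r).differentiableAt) (fun r => (hzero r).deriv)
  exact congrArg (fun x => (1 / 2 : ℝ) * x) (hconst s t)
end

section
/- Fix n ≥ 1, ε ∈ ℝ, A, B, C > 0, reals D₁, …, D_n and d₁, …, d_n, and set 𝕀 = diag(A, B, C). Let Ω, Γ₁, …, Γ_n : ℝ → ℝ³ be differentiable curves with |Γ_i(t)| = 1 for all i, t, and define M(t) = 𝕀Ω(t) + Σ_{i=1}^n D_i (Ω(t) − ⟨Γ_i(t), Ω(t)⟩ Γ_i(t)) and N(t) = Σ_{i=1}^n d_i Γ_i(t). If the curves satisfy the reduced equations Ṁ(t) = M(t) × Ω(t) + (1 − ε) N(t) × Ω(t) and Γ̇_i(t) = ε Γ_i(t) × Ω(t), then d/dt (M(t) + N(t)) = (M(t) + N(t)) × Ω(t), and consequently F₂ = ⟨M(t)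 + N(t), M(t) + N(t)⟩ is constant in t. -/
open Matrix

/-- For the reduced spherical ball bearing system with `n` balls,
`Ṁ = M × Ω + (1 − ε) N × Ω`, `Γ̇ᵢ = ε Γᵢ × Ω`, where
`M = 𝕀Ω + Σᵢ Dᵢ (Ω − ⟨Γᵢ, Ω⟩ Γᵢ)` and `N = Σᵢ dᵢ Γᵢ`, one has
`d/dt (M + N) = (M + N) × Ω`, and consequently `F₂ = ⟨M + N, M + N⟩` is a
first integral. -/
theorem spherical_ball_bearing_momentum_integral
    (n : ℕ) (hn : 1 ≤ n) (ε A B C : ℝ) (hA : 0 < A) (hB : 0 < B) (hC : 0 < C)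
    (D d : Fin n → ℝ)
    (Ω : ℝ → Fin 3 → ℝ) (hΩ : Differentiable ℝ Ω)
    (Γ : Fin n → ℝ → Fin 3 → ℝ)
    (hunit : ∀ (i : Fin n) (t : ℝ), Γ i t ⬝ᵥ Γ i t = 1)
    (M N : ℝ → Fin 3 → ℝ)
    (hM : ∀ t : ℝ, M t = (Matrix.diagonal ![A, B, C]).mulVec (Ω t)
        + ∑ i : Fin n, D i • (Ω t - (Γ i t ⬝ᵥ Ω t) • Γ i t))
    (hN : ∀ t : ℝ, N t = ∑ i : Fin n, d i • Γ i t)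
    (hMdot : ∀ t : ℝ, HasDerivAt M (M t ⨯₃ Ω t + (1 - ε) • (N t ⨯₃ Ω t)) t)
    (hΓdot : ∀ (i : Fin n) (t : ℝ), HasDerivAt (Γ i) (ε • (Γ i t ⨯₃ Ω t)) t) :
    (∀ t : ℝ, HasDerivAt (fun s => M s + N s) ((M t + N t) ⨯₃ Ω t) t) ∧
    (∀ s t : ℝ, (M s + N s) ⬝ᵥ (M s + N s) = (M t + N t) ⬝ᵥ (M t + N t)) := by
  have hNdot : ∀ t : ℝ, HasDerivAt N (ε • (N t ⨯₃ Ω t)) t := by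
    intro t
    have hfun : N = fun s => ∑ i : Fin n, d i • Γ i s := funext hN
    rw [hfun]
    have h : HasDerivAt (fun s => ∑ i : Fin n, d i • Γ i s)
        (∑ i : Fin n, d i • (ε • (Γ i t ⨯₃ Ω t))) t :=
      HasDerivAt.fun_sum fun i _ => (hΓdot i t).const_smul (d i)
    convert h using 1
    simp only [map_sum, _root_.map_smul, LinearMap.sum_apply, LinearMap.smul_apply,
      Finset.smul_sum]
    exact Finset.sum_congr rfl fun i _ => smul_comm _ _ _
  have hX : ∀ t : ℝ, HasDerivAt (fun s => M s + N s) ((M t + N t) ⨯₃ Ω t) t := by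
    intro t
    have h := (hMdot t).add (hNdot t)
    convert h using 1
    case e'_4 => rfl
    case e'_5 => rfl
    case e'_6 => rfl
    case e'_8 => rfl
    rw [show ∀ u : Fin 3 → ℝ, u ⨯₃ Ω t = crossProduct u (Ω t) from fun _ => rfl,
      map_add]
    simp only [LinearMap.add_apply]
    module
  refine ⟨hX, fun s t => ?_⟩
  set X : ℝ → Fin 3 → ℝ := fun s => M s + N s with hXdef
  have hf : ∀ u : ℝ, HasDerivAt (fun s => X s ⬝ᵥ X s) 0 u := by
    intro u
    have hcomp : ∀ j : Fin 3, HasDerivAt (fun s => X s j) ((X u ⨯₃ Ω u) j) u :=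
      hasDerivAt_pi.mp (hX u)
    have h : HasDerivAt (fun s => ∑ j : Fin 3, X s j * X s j)
        (∑ j : Fin 3, ((X u ⨯₃ Ω u) j * X u j + X u j * (X u ⨯₃ Ω u) j)) u :=
      HasDerivAt.fun_sum fun j _ => (hcomp j).mul (hcomp j)
    have hzero : (∑ j : Fin 3, ((X u ⨯₃ Ω u) j * X u j + X u j * (X u ⨯₃ Ω u) j)) = 0 := by
      simp [crossProduct, Fin.sum_univ_three]
      ring
    rw [hzero] at h
    exact h.congr_deriv rfl |>.congr_of_eventuallyEq
      (Filter.Eventually.of_forall fun s => by simp [dotProduct])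
  exact is_const_of_deriv_eq_zero (fun u => (hf u).differentiableAt)
    (fun u => (hf u).deriv) s t
end

section
/- Fix A, B, C, D > 0, d ∈ ℝ, ε ∈ ℝ, and set 𝕀 = diag(A, B, C) and 𝐈(Γ) = 𝕀 + D·E − D·Γ Γᵀ. Let Ω, Γ : ℝ → ℝ³ be differentiable curves with |Γ(t)| = 1 for all t, set L(t) = ⟨Ω(t), Γ(t)⟩ and 𝐌(t) = 𝐈(Γ(t))Ω(t) + dΓ(t). If 𝐌̇(t) = 𝐌(t) × Ω(t) and Γ̇(t) = ε Γ(t) × Ω(t) for all t, then 𝐈(Γ(t)) Ω̇(t) = 𝕀Ω(t) × Ω(t) + (ε − 1)(D L(t) − d) Γ(t) × Ω(t) for all t. -/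
open Matrix

/-- The modified inertia operator `𝐈(Γ) = diag(A,B,C) + D·E − D·Γ Γᵀ` of the
spherical ball bearing problem with one ball. -/
noncomputable def modInertia (A B C D : ℝ) (Γ : Fin 3 → ℝ) : Matrix (Fin 3) (Fin 3) ℝ :=
  Matrix.diagonal ![A, B, C] + D • (1 : Matrix (Fin 3) (Fin 3) ℝ) - D • vecMulVec Γ Γ

/-- The reduced spherical ball bearing system with one ball,
`𝐌̇ = 𝐌 × Ω`, `Γ̇ = ε Γ × Ω` with `𝐌 = 𝐈(Γ)Ω + dΓ`, written explicitly:
`𝐈(Γ) Ω̇ = 𝕀Ω × Ω + (ε − 1)(D L − d) Γ × Ω`, where `L = ⟨Ω, Γ⟩`. -/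
theorem spherical_ball_bearing_explicit_form
    (A B C D : ℝ) (hA : 0 < A) (hB : 0 < B) (hC : 0 < C) (hD : 0 < D) (d ε : ℝ)
    (Ω Ω' Γ : ℝ → Fin 3 → ℝ)
    (hΩ : ∀ t : ℝ, HasDerivAt Ω (Ω' t) t)
    (hunit : ∀ t : ℝ, Γ t ⬝ᵥ Γ t = 1)
    (M : ℝ → Fin 3 → ℝ)
    (hM : ∀ t : ℝ, M t = (modInertia A B C D (Γ t)).mulVec (Ω t) + d • Γ t)
    (hMdot : ∀ t : ℝ, HasDerivAt M (M t ⨯₃ Ω t) t)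
    (hΓdot : ∀ t : ℝ, HasDerivAt Γ (ε • (Γ t ⨯₃ Ω t)) t) :
    ∀ t : ℝ,
      (modInertia A B C D (Γ t)).mulVec (Ω' t) =
        (Matrix.diagonal ![A, B, C]).mulVec (Ω t) ⨯₃ Ω t
          + ((ε - 1) * (D * (Ω t ⬝ᵥ Γ t) - d)) • (Γ t ⨯₃ Ω t) := by
  intro t
  set K : Matrix (Fin 3) (Fin 3) ℝ := Matrix.diagonal ![A, B, C] + D • (1 : Matrix (Fin 3) (Fin 3) ℝ) with hKdef
  have hK : HasDerivAt (fun s => K.mulVec (Ω s)) (K.mulVec (Ω' t)) t := by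
    refine hasDerivAt_pi.2 fun i => ?_
    simpa [Matrix.mulVec, dotProduct] using
      HasDerivAt.fun_sum (fun j _ => ((hasDerivAt_pi.1 (hΩ t)) j).const_mul (K i j))
  have hg : HasDerivAt (fun s => Γ s ⬝ᵥ Ω s) ((ε • (Γ t ⨯₃ Ω t)) ⬝ᵥ Ω t + Γ t ⬝ᵥ Ω' t) t := by
    simpa [dotProduct, Finset.sum_add_distrib] using
      HasDerivAt.fun_sum (fun i _ => ((hasDerivAt_pi.1 (hΓdot t)) i).mul ((hasDerivAt_pi.1 (hΩ t)) i))
  have hsc : HasDerivAt (fun s => (d - D * (Γ s ⬝ᵥ Ω s)) • Γ s)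
      ((d - D * (Γ t ⬝ᵥ Ω t)) • (ε • (Γ t ⨯₃ Ω t))
        + (0 - D * ((ε • (Γ t ⨯₃ Ω t)) ⬝ᵥ Ω t + Γ t ⬝ᵥ Ω' t)) • Γ t) t :=
    ((hasDerivAt_const t d).sub (hg.const_mul D)).smul (hΓdot t)
  have hN := hK.fun_add hsc
  have hNM : (fun s => K.mulVec (Ω s) + (d - D * (Γ s ⬝ᵥ Ω s)) • Γ s) = M := by
    funext s
    rw [hM s]
    funext i
    simp [hKdef, modInertia, Matrix.mulVec, dotProduct, vecMulVec, Matrix.sub_apply,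
      Matrix.add_apply, Matrix.smul_apply, Fin.sum_univ_three]
    ring
  rw [hNM] at hN
  have hE := hN.unique (hMdot t)
  simp only [hM t] at hE
  have hP : ∀ (w : Fin 3 → ℝ) (j : Fin 3), ((modInertia A B C D (Γ t)).mulVec w) j
      = (![A,B,C] j + D) * w j - D * (Γ t ⬝ᵥ w) * Γ t j := by
    intro w j
    fin_cases j <;>
    · simp [modInertia, Matrix.mulVec, dotProduct, vecMulVec, Matrix.sub_apply, Matrix.add_apply,
        Matrix.smul_apply, Matrix.one_apply, Matrix.diagonal_apply, Fin.sum_univ_three]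
      ring
  funext i
  have h1 := congrFun hE i
  fin_cases i <;>
  · simp [hKdef, modInertia, Matrix.sub_apply, Matrix.vecMulVec_apply, Matrix.vecHead,
      Matrix.vecTail, Function.comp, cross_apply, Matrix.mulVec_diagonal, hP, dotProduct, Matrix.mulVec,
      Matrix.add_apply, Matrix.smul_apply, Matrix.one_apply, Matrix.diagonal_apply,
      Fin.sum_univ_three, Pi.add_apply, Pi.smul_apply, smul_eq_mul,
      Matrix.cons_val_zero, Matrix.cons_val_one, Matrix.head_cons, Fin.isValue,
      Matrix.cons_val_two, Matrix.tail_cons] at h1 ⊢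
    linear_combination h1
end

section
/- Fix A, B, C, D > 0 and d ∈ ℝ, set 𝕀 = diag(A, B, C) and 𝐈(Γ) = 𝕀 + D·E − D·Γ Γᵀ. Let Ω, Γ : ℝ → ℝ³ be differentiable curves with |Γ(t)| = 1 for all t, set 𝐌(t) = 𝐈(Γ(t))Ω(t) + dΓ(t), and suppose 𝐌̇(t) = 𝐌(t) × Ω(t) and Γ̇(t) = − Γ(t) × Ω(t) for all t (i.e., the system with ε = −1, which arises in configuration III when 2r = 3R). Then the function F₃(t) = (B + C − A + D) 𝐌₁(t) Γ₁(t) + (A + C − B + D) 𝐌₂(t) Γ₂(t) + (A + B − C + D) 𝐌₃(t) Γ₃(t) is constant in t. -/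
open Matrix

lemma cross_apply0 (u v : Fin 3 → ℝ) : (u ⨯₃ v) 0 = u 1 * v 2 - u 2 * v 1 := by
  simp [crossProduct]

lemma cross_apply1 (u v : Fin 3 → ℝ) : (u ⨯₃ v) 1 = u 2 * v 0 - u 0 * v 2 := by
  simp [crossProduct]

lemma cross_apply2 (u v : Fin 3 → ℝ) : (u ⨯₃ v) 2 = u 0 * v 1 - u 1 * v 0 := by
  simp [crossProduct]

lemma modInertia_mulVec0 (A B C D : ℝ) (G W : Fin 3 → ℝ) :
    (modInertia A B C D G).mulVec W 0
      = (A + D) * W 0 - D * (G 0 * W 0 + G 1 * W 1 + G 2 * W 2) * G 0 := by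
  simp [modInertia, mulVec, dotProduct, Fin.sum_univ_three, vecMulVec_apply,
    Matrix.one_apply, Matrix.diagonal_apply]
  ring

lemma modInertia_mulVec1 (A B C D : ℝ) (G W : Fin 3 → ℝ) :
    (modInertia A B C D G).mulVec W 1
      = (B + D) * W 1 - D * (G 0 * W 0 + G 1 * W 1 + G 2 * W 2) * G 1 := by
  simp [modInertia, mulVec, dotProduct, Fin.sum_univ_three, vecMulVec_apply,
    Matrix.one_apply, Matrix.diagonal_apply]
  ring

lemma modInertia_mulVec2 (A B C D : ℝ) (G W : Fin 3 → ℝ) :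
    (modInertia A B C D G).mulVec W 2
      = (C + D) * W 2 - D * (G 0 * W 0 + G 1 * W 1 + G 2 * W 2) * G 2 := by
  simp [modInertia, mulVec, dotProduct, Fin.sum_univ_three, vecMulVec_apply,
    Matrix.one_apply, Matrix.diagonal_apply]
  ring

/-- (First integrable case.) For the reduced spherical ball bearing
system with one ball and `ε = −1` (configuration III with `2r = 3R`), the function
`F₃ = (B+C−A+D) 𝐌₁Γ₁ + (A+C−B+D) 𝐌₂Γ₂ + (A+B−C+D) 𝐌₃Γ₃` is a first integral. -/
theorem spherical_ball_bearing_first_integrable_case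
    (A B C D : ℝ) (hA : 0 < A) (hB : 0 < B) (hC : 0 < C) (hD : 0 < D) (d : ℝ)
    (Ω Γ : ℝ → Fin 3 → ℝ)
    (hΩ : Differentiable ℝ Ω)
    (hunit : ∀ t : ℝ, Γ t ⬝ᵥ Γ t = 1)
    (M : ℝ → Fin 3 → ℝ)
    (hM : ∀ t : ℝ, M t = (modInertia A B C D (Γ t)).mulVec (Ω t) + d • Γ t)
    (hMdot : ∀ t : ℝ, HasDerivAt M (M t ⨯₃ Ω t) t)
    (hΓdot : ∀ t : ℝ, HasDerivAt Γ (-(Γ t ⨯₃ Ω t)) t) :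
    ∀ s t : ℝ,
      (B + C - A + D) * M s 0 * Γ s 0 + (A + C - B + D) * M s 1 * Γ s 1
          + (A + B - C + D) * M s 2 * Γ s 2 =
        (B + C - A + D) * M t 0 * Γ t 0 + (A + C - B + D) * M t 1 * Γ t 1
          + (A + B - C + D) * M t 2 * Γ t 2 := by
  have key : ∀ u : ℝ, HasDerivAt (fun u =>
      (B + C - A + D) * M u 0 * Γ u 0 + (A + C - B + D) * M u 1 * Γ u 1
        + (A + B - C + D) * M u 2 * Γ u 2) 0 u := by
    intro u
    have hM0 := hasDerivAt_pi.1 (hMdot u) 0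
    have hM1 := hasDerivAt_pi.1 (hMdot u) 1
    have hM2 := hasDerivAt_pi.1 (hMdot u) 2
    have hG0 := hasDerivAt_pi.1 (hΓdot u) 0
    have hG1 := hasDerivAt_pi.1 (hΓdot u) 1
    have hG2 := hasDerivAt_pi.1 (hΓdot u) 2
    have H := ((((hM0.const_mul (B + C - A + D)).mul hG0).add
        ((hM1.const_mul (A + C - B + D)).mul hG1)).add
        ((hM2.const_mul (A + B - C + D)).mul hG2))
    refine H.congr_deriv ?_
    have h0 : M u 0 = (A + D) * Ω u 0
        - D * (Γ u 0 * Ω u 0 + Γ u 1 * Ω u 1 + Γ u 2 * Ω u 2) * Γ u 0 + d * Γ u 0 := by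
      rw [hM u]
      simp only [Pi.add_apply, Pi.smul_apply, smul_eq_mul, modInertia_mulVec0]
    have h1 : M u 1 = (B + D) * Ω u 1
        - D * (Γ u 0 * Ω u 0 + Γ u 1 * Ω u 1 + Γ u 2 * Ω u 2) * Γ u 1 + d * Γ u 1 := by
      rw [hM u]
      simp only [Pi.add_apply, Pi.smul_apply, smul_eq_mul, modInertia_mulVec1]
    have h2 : M u 2 = (C + D) * Ω u 2
        - D * (Γ u 0 * Ω u 0 + Γ u 1 * Ω u 1 + Γ u 2 * Ω u 2) * Γ u 2 + d * Γ u 2 := by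
      rw [hM u]
      simp only [Pi.add_apply, Pi.smul_apply, smul_eq_mul, modInertia_mulVec2]
    simp only [LinearMap.neg_apply, Pi.neg_apply, cross_apply0, cross_apply1, cross_apply2]
    rw [h0, h1, h2]
    ring
  intro s t
  exact is_const_of_deriv_eq_zero (fun u => (key u).differentiableAt)
    (fun u => (key u).deriv) s t
end

section
/- Fix A, C, D > 0, d ∈ ℝ, ε ∈ ℝ, set 𝕀 = diag(A, C, C) (the dynamically symmetric case B = C) and 𝐈(Γ) = 𝕀 + D·E − D·Γ Γᵀ. Let Ω, Γ : ℝ → ℝ³ be differentiable curves with |Γ(t)| = 1, set 𝐌(t) = 𝐈(Γ(t))Ω(t) + dΓ(t), and suppose 𝐌̇(t) = 𝐌(t) × Ω(t) and Γ̇(t) = ε Γ(t) × Ω(t) for all t. Define G(t) = (A − C) Ω₁(t) Γ₁(t) + C ⟨Ω(t), Γ(t)⟩. Then for all t, Ġ(t) = (ε − 1)(A − C) Ω₁(t) (Γ₂(t) Ω₃(t) − Γ₃(t) Ω₂(t)); equivalently, ε Ġ(t) = (ε − 1)(A − C) Ω₁(t) Γ̇₁(t). -/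
open Matrix

/-- In the dynamically symmetric case `B = C` of the reduced
spherical ball bearing system with one ball, the variable
`G = (A − C) Ω₁ Γ₁ + C ⟨Ω, Γ⟩` satisfies
`Ġ = (ε − 1)(A − C) Ω₁ (Γ₂Ω₃ − Γ₃Ω₂)`. -/
theorem spherical_ball_bearing_G_derivative
    (A C D : ℝ) (hA : 0 < A) (hC : 0 < C) (hD : 0 < D) (d ε : ℝ)
    (Ω Γ : ℝ → Fin 3 → ℝ)
    (hΩ : Differentiable ℝ Ω)
    (hunit : ∀ t : ℝ, Γ t ⬝ᵥ Γ t = 1)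
    (M : ℝ → Fin 3 → ℝ)
    (hM : ∀ t : ℝ, M t = (modInertia A C C D (Γ t)).mulVec (Ω t) + d • Γ t)
    (hMdot : ∀ t : ℝ, HasDerivAt M (M t ⨯₃ Ω t) t)
    (hΓdot : ∀ t : ℝ, HasDerivAt Γ (ε • (Γ t ⨯₃ Ω t)) t) :
    ∀ t : ℝ,
      HasDerivAt (fun s => (A - C) * Ω s 0 * Γ s 0 + C * (Ω s ⬝ᵥ Γ s))
        ((ε - 1) * (A - C) * Ω t 0 * (Γ t 1 * Ω t 2 - Γ t 2 * Ω t 1)) t := by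
  intro t
  have hMc : ∀ i, HasDerivAt (fun s => M s i) ((M t ⨯₃ Ω t) i) t :=
    fun i => (hasDerivAt_pi.mp (hMdot t)) i
  have hΓc : ∀ i, HasDerivAt (fun s => Γ s i) ((ε • (Γ t ⨯₃ Ω t)) i) t :=
    fun i => (hasDerivAt_pi.mp (hΓdot t)) i
  have key : (fun s => (A - C) * Ω s 0 * Γ s 0 + C * (Ω s ⬝ᵥ Γ s))
      = fun s => (M s 0 * Γ s 0 + M s 1 * Γ s 1 + M s 2 * Γ s 2) - d := by
    funext s
    have h1 := hunit s
    simp only [dotProduct, Fin.sum_univ_three] at h1 ⊢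
    rw [hM s]
    simp [modInertia, Matrix.sub_apply, Matrix.add_apply, Matrix.smul_apply,
      Matrix.mulVec, dotProduct, Fin.sum_univ_three, Pi.add_apply, Pi.smul_apply,
      vecMulVec_apply, Matrix.diagonal_apply, Matrix.one_apply]
    linear_combination (D*(Γ s 0*Ω s 0 + Γ s 1*Ω s 1 + Γ s 2*Ω s 2) - d) * h1
  rw [key]
  have hd : HasDerivAt
      (fun s => (M s 0 * Γ s 0 + M s 1 * Γ s 1 + M s 2 * Γ s 2) - d)
      (((M t ⨯₃ Ω t) 0 * Γ t 0 + M t 0 * (ε • (Γ t ⨯₃ Ω t)) 0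
        + ((M t ⨯₃ Ω t) 1 * Γ t 1 + M t 1 * (ε • (Γ t ⨯₃ Ω t)) 1)
        + ((M t ⨯₃ Ω t) 2 * Γ t 2 + M t 2 * (ε • (Γ t ⨯₃ Ω t)) 2))) t := by
    exact ((((hMc 0).mul (hΓc 0)).add (((hMc 1).mul (hΓc 1)))).add
      ((hMc 2).mul (hΓc 2))).sub_const d
  convert hd using 1
  rw [hM t]
  simp [crossProduct, LinearMap.mk₂_apply, modInertia, Matrix.sub_apply,
    Matrix.add_apply, Matrix.smul_apply, Matrix.mulVec, dotProduct,
    Fin.sum_univ_three, Pi.add_apply, Pi.smul_apply, vecMulVec_apply,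
    Matrix.diagonal_apply, Matrix.one_apply, Matrix.cons_val_zero,
    Matrix.cons_val_one, Matrix.cons_val_two, Matrix.head_cons, smul_eq_mul]
  ring
end

section
/- Fix A > C > 0, D > 0, d ∈ ℝ, ε ∈ ℝ, set 𝕀 = diag(A, C, C) and 𝐈(Γ) = 𝕀 + D·E − D·Γ Γᵀ. Let Ω, Γ : ℝ → ℝ³ be differentiable curves with |Γ(t)| = 1, set 𝐌(t) = 𝐈(Γ(t))Ω(t) + dΓ(t), and suppose 𝐌̇(t) = 𝐌(t) × Ω(t) and Γ̇(t) = ε Γ(t) × Ω(t) for all t. Define ρ(s) = √(C(A+D) + D(A−C)s²), F(t) = ρ(Γ₁(t)) Ω₁(t), and G(t) = (A − C) Ω₁(t) Γ₁(t) + C ⟨Ω(t), Γ(t)⟩. Then F is differentiable and for all t, ε ρ(Γ₁(t)) Ḟ(t) = (ε − 1)(D G(t) − C d) Γ̇₁(t). -/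
open Matrix

/-- In the dynamically symmetric case `B = C` (with `A > C`) of the
reduced spherical ball bearing system with one ball, the variable `F = ρ(Γ₁) Ω₁`,
where `ρ(s) = √(C(A+D) + D(A−C)s²)`, is differentiable and satisfies
`ε ρ(Γ₁) Ḟ = (ε − 1)(D G − C d) Γ̇₁` with `G = (A − C) Ω₁ Γ₁ + C ⟨Ω, Γ⟩`
(here `Γ̇₁ = ε (Γ × Ω)₁`). -/
theorem spherical_ball_bearing_F_derivative
    (A C D : ℝ) (hAC : C < A) (hC : 0 < C) (hD : 0 < D) (d ε : ℝ)
    (Ω Γ : ℝ → Fin 3 → ℝ)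
    (hΩ : Differentiable ℝ Ω)
    (hunit : ∀ t : ℝ, Γ t ⬝ᵥ Γ t = 1)
    (M : ℝ → Fin 3 → ℝ)
    (hM : ∀ t : ℝ, M t = (modInertia A C C D (Γ t)).mulVec (Ω t) + d • Γ t)
    (hMdot : ∀ t : ℝ, HasDerivAt M (M t ⨯₃ Ω t) t)
    (hΓdot : ∀ t : ℝ, HasDerivAt Γ (ε • (Γ t ⨯₃ Ω t)) t)
    (ρ : ℝ → ℝ) (hρ : ∀ s : ℝ, ρ s = Real.sqrt (C * (A + D) + D * (A - C) * s ^ 2))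
    (F : ℝ → ℝ) (hF : ∀ t : ℝ, F t = ρ (Γ t 0) * Ω t 0)
    (G : ℝ → ℝ) (hG : ∀ t : ℝ, G t = (A - C) * Ω t 0 * Γ t 0 + C * (Ω t ⬝ᵥ Γ t)) :
    Differentiable ℝ F ∧
      ∀ t : ℝ, ε * ρ (Γ t 0) * deriv F t =
        (ε - 1) * (D * G t - C * d) * (ε • (Γ t ⨯₃ Ω t)) 0 := by
  have hpos : ∀ s : ℝ, 0 < C * (A + D) + D * (A - C) * s ^ 2 := by
    intro s
    nlinarith [sq_nonneg s, mul_nonneg (mul_pos hD (by linarith : (0:ℝ) < A - C)).le (sq_nonneg s)]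
  have hρpos : ∀ s : ℝ, 0 < ρ s := by
    intro s; rw [hρ]; exact Real.sqrt_pos.mpr (hpos s)
  have hρsq : ∀ s : ℝ, ρ s ^ 2 = C * (A + D) + D * (A - C) * s ^ 2 := by
    intro s; rw [hρ, Real.sq_sqrt (hpos s).le]
  have hΩi : ∀ (t : ℝ) (i : Fin 3), HasDerivAt (fun s => Ω s i) (deriv Ω t i) t :=
    fun t i => hasDerivAt_pi.mp ((hΩ t).hasDerivAt) i
  have hΓi : ∀ (t : ℝ) (i : Fin 3),
      HasDerivAt (fun s => Γ s i) (ε * (Γ t ⨯₃ Ω t) i) t := by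
    intro t i
    simpa using hasDerivAt_pi.mp (hΓdot t) i
  have hMi : ∀ (t : ℝ) (i : Fin 3), HasDerivAt (fun s => M s i) ((M t ⨯₃ Ω t) i) t :=
    fun t i => hasDerivAt_pi.mp (hMdot t) i
  -- explicit components of M
  have hM0 : ∀ s : ℝ, M s 0 = (A + D) * Ω s 0 -
      D * (Γ s 0 * (Γ s 0 * Ω s 0 + Γ s 1 * Ω s 1 + Γ s 2 * Ω s 2)) + d * Γ s 0 := by
    intro s
    rw [hM]
    simp [modInertia, Matrix.mulVec, Matrix.vecMulVec_apply, dotProduct, Fin.sum_univ_three,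
      Matrix.diagonal, Matrix.one_apply]
    ring
  have hM1 : ∀ s : ℝ, M s 1 = (C + D) * Ω s 1 -
      D * (Γ s 1 * (Γ s 0 * Ω s 0 + Γ s 1 * Ω s 1 + Γ s 2 * Ω s 2)) + d * Γ s 1 := by
    intro s
    rw [hM]
    simp [modInertia, Matrix.mulVec, Matrix.vecMulVec_apply, dotProduct, Fin.sum_univ_three,
      Matrix.diagonal, Matrix.one_apply]
    ring
  have hM2 : ∀ s : ℝ, M s 2 = (C + D) * Ω s 2 -
      D * (Γ s 2 * (Γ s 0 * Ω s 0 + Γ s 1 * Ω s 1 + Γ s 2 * Ω s 2)) + d * Γ s 2 := by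
    intro s
    rw [hM]
    simp [modInertia, Matrix.mulVec, Matrix.vecMulVec_apply, dotProduct, Fin.sum_univ_three,
      Matrix.diagonal, Matrix.one_apply]
    ring
  -- derivative of F
  have hFd : ∀ t : ℝ, HasDerivAt F
      (D * (A - C) * Γ t 0 * (ε * (Γ t ⨯₃ Ω t) 0) / ρ (Γ t 0) * Ω t 0
        + ρ (Γ t 0) * deriv Ω t 0) t := by
    intro t
    have hFfun : F = fun s => ρ (Γ s 0) * Ω s 0 := funext hF
    rw [hFfun]
    have hin : HasDerivAt (fun s => C * (A + D) + D * (A - C) * (Γ s 0) ^ 2)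
        (D * (A - C) * (2 * Γ t 0 ^ 1 * (ε * (Γ t ⨯₃ Ω t) 0))) t :=
      HasDerivAt.const_add _ (((hΓi t 0).pow 2).const_mul (D * (A - C)))
    have hsqrt := (Real.hasDerivAt_sqrt (ne_of_gt (hpos (Γ t 0)))).comp t hin
    have hρΓ : HasDerivAt (fun s => ρ (Γ s 0))
        (D * (A - C) * Γ t 0 * (ε * (Γ t ⨯₃ Ω t) 0) / ρ (Γ t 0)) t := by
      have hfun : (fun s => ρ (Γ s 0)) =
          (fun s => Real.sqrt (C * (A + D) + D * (A - C) * (Γ s 0) ^ 2)) := by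
        funext s; rw [hρ]
      rw [hfun]
      convert hsqrt using 1
      · rfl
      · rfl
      · rfl
      rw [hρ] at *
      have h0 : Real.sqrt (C * (A + D) + D * (A - C) * (Γ t 0) ^ 2) ≠ 0 :=
        (Real.sqrt_pos.mpr (hpos (Γ t 0))).ne'
      field_simp
    exact hρΓ.mul (hΩi t 0)
  refine ⟨fun t => (hFd t).differentiableAt, fun t => ?_⟩
  rw [(hFd t).deriv]
  -- cross product components
  have hW0 : (Γ t ⨯₃ Ω t) 0 = Γ t 1 * Ω t 2 - Γ t 2 * Ω t 1 := by simp [crossProduct]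
  have hW1 : (Γ t ⨯₃ Ω t) 1 = Γ t 2 * Ω t 0 - Γ t 0 * Ω t 2 := by simp [crossProduct]
  have hW2 : (Γ t ⨯₃ Ω t) 2 = Γ t 0 * Ω t 1 - Γ t 1 * Ω t 0 := by simp [crossProduct]
  -- derivative of the dot product Γ ⬝ Ω
  have hK : HasDerivAt (fun s => Γ s 0 * Ω s 0 + Γ s 1 * Ω s 1 + Γ s 2 * Ω s 2)
      ((ε * (Γ t ⨯₃ Ω t) 0 * Ω t 0 + Γ t 0 * deriv Ω t 0) + (ε * (Γ t ⨯₃ Ω t) 1 * Ω t 1 + Γ t 1 * deriv Ω t 1)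
        + (ε * (Γ t ⨯₃ Ω t) 2 * Ω t 2 + Γ t 2 * deriv Ω t 2)) t :=
    (((hΓi t 0).mul (hΩi t 0)).add ((hΓi t 1).mul (hΩi t 1))).add ((hΓi t 2).mul (hΩi t 2))
  -- the three scalar equations of motion
  have mk : ∀ (j : Fin 3) (c : ℝ),
      (∀ s : ℝ, M s j = c * Ω s j -
        D * (Γ s j * (Γ s 0 * Ω s 0 + Γ s 1 * Ω s 1 + Γ s 2 * Ω s 2)) + d * Γ s j) →
      c * deriv Ω t j -
        D * (ε * (Γ t ⨯₃ Ω t) j * (Γ t 0 * Ω t 0 + Γ t 1 * Ω t 1 + Γ t 2 * Ω t 2) +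
          Γ t j * ((ε * (Γ t ⨯₃ Ω t) 0 * Ω t 0 + Γ t 0 * deriv Ω t 0) + (ε * (Γ t ⨯₃ Ω t) 1 * Ω t 1 + Γ t 1 * deriv Ω t 1)
            + (ε * (Γ t ⨯₃ Ω t) 2 * Ω t 2 + Γ t 2 * deriv Ω t 2))) + d * (ε * (Γ t ⨯₃ Ω t) j)
        = (M t ⨯₃ Ω t) j := by
    intro j c hcomp
    have h1 : HasDerivAt (fun s => c * Ω s j -
        D * (Γ s j * (Γ s 0 * Ω s 0 + Γ s 1 * Ω s 1 + Γ s 2 * Ω s 2)) + d * Γ s j)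
        (c * deriv Ω t j -
          D * (ε * (Γ t ⨯₃ Ω t) j * (Γ t 0 * Ω t 0 + Γ t 1 * Ω t 1 + Γ t 2 * Ω t 2) +
            Γ t j * ((ε * (Γ t ⨯₃ Ω t) 0 * Ω t 0 + Γ t 0 * deriv Ω t 0) + (ε * (Γ t ⨯₃ Ω t) 1 * Ω t 1 + Γ t 1 * deriv Ω t 1)
              + (ε * (Γ t ⨯₃ Ω t) 2 * Ω t 2 + Γ t 2 * deriv Ω t 2))) + d * (ε * (Γ t ⨯₃ Ω t) j)) t :=
      (((hΩi t j).const_mul c).sub (((hΓi t j).mul hK).const_mul D)).add ((hΓi t j).const_mul d)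
    have h2 : HasDerivAt (fun s => M s j) _ t := hMi t j
    exact (h1.congr_of_eventuallyEq (Filter.Eventually.of_forall fun s => hcomp s)).unique h2
  have eq0 := mk 0 (A + D) hM0
  have eq1 := mk 1 (C + D) hM1
  have eq2 := mk 2 (C + D) hM2
  have hcM0 : (M t ⨯₃ Ω t) 0 = M t 1 * Ω t 2 - M t 2 * Ω t 1 := by simp [crossProduct]
  have hcM1 : (M t ⨯₃ Ω t) 1 = M t 2 * Ω t 0 - M t 0 * Ω t 2 := by simp [crossProduct]
  have hcM2 : (M t ⨯₃ Ω t) 2 = M t 0 * Ω t 1 - M t 1 * Ω t 0 := by simp [crossProduct]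
  rw [hW0, hW1, hW2, hcM0, hM1 t, hM2 t] at eq0
  rw [hW0, hW1, hW2, hcM1, hM2 t, hM0 t] at eq1
  rw [hW0, hW1, hW2, hcM2, hM0 t, hM1 t] at eq2
  -- unit norm
  have hu : Γ t 0 ^ 2 + Γ t 1 ^ 2 + Γ t 2 ^ 2 = 1 := by
    have := hunit t
    simp [dotProduct, Fin.sum_univ_three] at this
    linear_combination this
  -- step 1 : C * Kdot = -(A-C) * (Γ t 0*deriv Ω t 0 + Ω t 0*W0)
  have step1 : C * (Γ t 0 * deriv Ω t 0 + Γ t 1 * deriv Ω t 1 + Γ t 2 * deriv Ω t 2) + (A - C) * (Γ t 0 * deriv Ω t 0)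
      = -(A - C) * Ω t 0 * (Γ t 1 * Ω t 2 - Γ t 2 * Ω t 1) := by
    linear_combination Γ t 0 * eq0 + Γ t 1 * eq1 + Γ t 2 * eq2 +
      D * (Γ t 0 * deriv Ω t 0 + Γ t 1 * deriv Ω t 1 + Γ t 2 * deriv Ω t 2) * hu
  -- step 2
  have step2 : (C * (A + D) + D * (A - C) * Γ t 0 ^ 2) * deriv Ω t 0
      = C * (1 - ε) * (d - D * (Γ t 0 * Ω t 0 + Γ t 1 * Ω t 1 + Γ t 2 * Ω t 2)) * (Γ t 1 * Ω t 2 - Γ t 2 * Ω t 1)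
        - D * (A - C) * Γ t 0 * Ω t 0 * (Γ t 1 * Ω t 2 - Γ t 2 * Ω t 1) := by
    linear_combination C * eq0 + D * Γ t 0 * step1
  -- final computation
  rw [hG]
  simp only [hW0, Pi.smul_apply, smul_eq_mul, dotProduct, Fin.sum_univ_three]
  have hρne : ρ (Γ t 0) ≠ 0 := (hρpos (Γ t 0)).ne'
  have hexp : ε * ρ (Γ t 0) * (D * (A - C) * Γ t 0 * (ε * (Γ t 1 * Ω t 2 - Γ t 2 * Ω t 1)) / ρ (Γ t 0) * Ω t 0
      + ρ (Γ t 0) * deriv Ω t 0)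
      = ε * (D * (A - C) * Γ t 0 * (ε * (Γ t 1 * Ω t 2 - Γ t 2 * Ω t 1)) * Ω t 0 + ρ (Γ t 0) ^ 2 * deriv Ω t 0) := by
    field_simp
  rw [hexp, hρsq (Γ t 0)]
  linear_combination ε * step2
end

section
/- Fix A > C > 0, D > 0, d ∈ ℝ, and ε ∈ ℝ with ε ≠ 0. Set 𝕀 = diag(A, C, C) and 𝐈(Γ) = 𝕀 + D·E − D·Γ Γᵀ. Let Ω, Γ : ℝ → ℝ³ be differentiable curves with |Γ(t)| = 1, set 𝐌(t) = 𝐈(Γ(t))Ω(t) + dΓ(t), and suppose 𝐌̇(t) = 𝐌(t) × Ω(t) and Γ̇(t) = ε Γ(t) × Ω(t) for all t. Define ρ(s) = √(C(A+D) + D(A−C)s²), F(t) = ρ(Γ₁(t)) Ω₁(t), G(t) = (A − C) Ω₁(t) Γ₁(t) + C ⟨Ω(t), Γ(t)⟩, and let Φ : ℝ → ℝ be any differentiable function with Φ̇(t) = Γ̇₁(t)/(ε ρ(Γ₁(t))) for all t. Then for each choice of sign, the (nonalgebraic) function F₃^± (t) = (± √(D(A−C)) F(t) + D G(t) − d C)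 · exp(± (1 − ε) √(D(A−C)) Φ(t)) is constant in t. In particular, the spherical ball bearing problem with B = C is integrable for any ε. -/
open Matrix

set_option maxHeartbeats 2000000 in
/-- (Second integrable case.) In the dynamically symmetric case
`B = C` (with `A > C`) of the reduced spherical ball bearing system with one ball,
for each sign `σ = ±1` the nonalgebraic function
`F₃^± = (± √(D(A−C)) F + D G − d C) · exp(± (1 − ε) √(D(A−C)) Φ)` is a first
integral, where `ρ(s) = √(C(A+D) + D(A−C)s²)`, `F = ρ(Γ₁)Ω₁`,
`G = (A−C)Ω₁Γ₁ + C⟨Ω,Γ⟩`, and `Φ` is a primitive of `Γ̇₁/(ε ρ(Γ₁))` along the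
motion. In particular, the spherical ball bearing problem with `B = C` is
integrable for any `ε ≠ 0`. -/
theorem spherical_ball_bearing_second_integrable_case
    (A C D : ℝ) (hAC : C < A) (hC : 0 < C) (hD : 0 < D) (d ε : ℝ) (hε : ε ≠ 0)
    (Ω Γ : ℝ → Fin 3 → ℝ)
    (hΩ : Differentiable ℝ Ω)
    (hunit : ∀ t : ℝ, Γ t ⬝ᵥ Γ t = 1)
    (M : ℝ → Fin 3 → ℝ)
    (hM : ∀ t : ℝ, M t = (modInertia A C C D (Γ t)).mulVec (Ω t) + d • Γ t)
    (hMdot : ∀ t : ℝ, HasDerivAt M (M t ⨯₃ Ω t) t)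
    (hΓdot : ∀ t : ℝ, HasDerivAt Γ (ε • (Γ t ⨯₃ Ω t)) t)
    (ρ : ℝ → ℝ) (hρ : ∀ s : ℝ, ρ s = Real.sqrt (C * (A + D) + D * (A - C) * s ^ 2))
    (F : ℝ → ℝ) (hF : ∀ t : ℝ, F t = ρ (Γ t 0) * Ω t 0)
    (G : ℝ → ℝ) (hG : ∀ t : ℝ, G t = (A - C) * Ω t 0 * Γ t 0 + C * (Ω t ⬝ᵥ Γ t))
    (Φ : ℝ → ℝ)
    (hΦ : ∀ t : ℝ, HasDerivAt Φ ((ε • (Γ t ⨯₃ Ω t)) 0 / (ε * ρ (Γ t 0))) t)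
    (σ : ℝ) (hσ : σ = 1 ∨ σ = -1) :
    ∀ s t : ℝ,
      (σ * Real.sqrt (D * (A - C)) * F s + D * G s - d * C) *
          Real.exp (σ * (1 - ε) * Real.sqrt (D * (A - C)) * Φ s) =
        (σ * Real.sqrt (D * (A - C)) * F t + D * G t - d * C) *
          Real.exp (σ * (1 - ε) * Real.sqrt (D * (A - C)) * Φ t) := by
  have hσ2 : σ ^ 2 = 1 := by rcases hσ with h | h <;> rw [h] <;> norm_num
  have hk2 : Real.sqrt (D * (A - C)) ^ 2 = D * (A - C) := Real.sq_sqrt (by nlinarith)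
  have key : ∀ x : ℝ, HasDerivAt (fun t =>
      (σ * Real.sqrt (D * (A - C)) * F t + D * G t - d * C) *
        Real.exp (σ * (1 - ε) * Real.sqrt (D * (A - C)) * Φ t)) 0 x := by
    intro x
    have hΓi := hasDerivAt_pi.1 (hΓdot x)
    have hMi := hasDerivAt_pi.1 (hMdot x)
    have hWi : ∀ i, HasDerivAt (fun t => Ω t i) (deriv (fun t => Ω t i) x) x :=
      fun i => ((differentiable_pi.1 hΩ i) x).hasDerivAt
    have hg0 : HasDerivAt (fun t => Γ t 0) (ε * (Γ x 1 * Ω x 2 - Γ x 2 * Ω x 1)) x := by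
      simpa [cross_apply] using hΓi 0
    have hg1 : HasDerivAt (fun t => Γ t 1) (ε * (Γ x 2 * Ω x 0 - Γ x 0 * Ω x 2)) x := by
      simpa [cross_apply] using hΓi 1
    have hg2 : HasDerivAt (fun t => Γ t 2) (ε * (Γ x 0 * Ω x 1 - Γ x 1 * Ω x 0)) x := by
      simpa [cross_apply] using hΓi 2
    have hM0 : ∀ t, M t 0 = (A+D) * Ω t 0 - D * Γ t 0 * (Γ t 0 * Ω t 0 + Γ t 1 * Ω t 1 + Γ t 2 * Ω t 2) + d * Γ t 0 := by
      intro t; rw [hM]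
      simp [modInertia, mulVec, vecMulVec, dotProduct, Fin.sum_univ_three, Matrix.diagonal, Matrix.one_apply]
      ring
    have hM1 : ∀ t, M t 1 = (C+D) * Ω t 1 - D * Γ t 1 * (Γ t 0 * Ω t 0 + Γ t 1 * Ω t 1 + Γ t 2 * Ω t 2) + d * Γ t 1 := by
      intro t; rw [hM]
      simp [modInertia, mulVec, vecMulVec, dotProduct, Fin.sum_univ_three, Matrix.diagonal, Matrix.one_apply]
      ring
    have hM2 : ∀ t, M t 2 = (C+D) * Ω t 2 - D * Γ t 2 * (Γ t 0 * Ω t 0 + Γ t 1 * Ω t 1 + Γ t 2 * Ω t 2) + d * Γ t 2 := by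
      intro t; rw [hM]
      simp [modInertia, mulVec, vecMulVec, dotProduct, Fin.sum_univ_three, Matrix.diagonal, Matrix.one_apply]
      ring
    have hdot := ((hg0.mul (hWi 0)).add (hg1.mul (hWi 1))).add (hg2.mul (hWi 2))
    have hf0 := (((hWi 0).const_mul (A+D)).sub (((hg0.const_mul D).mul hdot))).add (hg0.const_mul d)
    have hf1 := (((hWi 1).const_mul (C+D)).sub (((hg1.const_mul D).mul hdot))).add (hg1.const_mul d)
    have hf2 := (((hWi 2).const_mul (C+D)).sub (((hg2.const_mul D).mul hdot))).add (hg2.const_mul d)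
    have hMx0 : HasDerivAt (fun t => (A+D) * Ω t 0 - D * Γ t 0 * (Γ t 0 * Ω t 0 + Γ t 1 * Ω t 1 + Γ t 2 * Ω t 2) + d * Γ t 0) ((M x ⨯₃ Ω x) 0) x := by
      have h := hMi 0
      rwa [show (fun t => M t 0) = _ from funext hM0] at h
    have hMx1 : HasDerivAt (fun t => (C+D) * Ω t 1 - D * Γ t 1 * (Γ t 0 * Ω t 0 + Γ t 1 * Ω t 1 + Γ t 2 * Ω t 2) + d * Γ t 1) ((M x ⨯₃ Ω x) 1) x := by
      have h := hMi 1
      rwa [show (fun t => M t 1) = _ from funext hM1] at h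
    have hMx2 : HasDerivAt (fun t => (C+D) * Ω t 2 - D * Γ t 2 * (Γ t 0 * Ω t 0 + Γ t 1 * Ω t 1 + Γ t 2 * Ω t 2) + d * Γ t 2) ((M x ⨯₃ Ω x) 2) x := by
      have h := hMi 2
      rwa [show (fun t => M t 2) = _ from funext hM2] at h
    have E0 := hf0.unique hMx0
    have E1 := hf1.unique hMx1
    have E2 := hf2.unique hMx2
    simp only [cross_apply, Matrix.cons_val_zero, Matrix.cons_val_one, Matrix.head_cons,
      Matrix.cons_val_two, Matrix.tail_cons, hM0 x, hM1 x, hM2 x, Pi.add_apply, Pi.mul_apply] at E0 E1 E2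
    have hu := hunit x
    simp only [dotProduct, Fin.sum_univ_three] at hu
    -- positivity facts
    have hupos : (0:ℝ) < C * (A + D) + D * (A - C) * Γ x 0 ^ 2 := by nlinarith [sq_nonneg (Γ x 0)]
    have hq2 : Real.sqrt (C * (A + D) + D * (A - C) * Γ x 0 ^ 2) ^ 2 = C * (A + D) + D * (A - C) * Γ x 0 ^ 2 :=
      Real.sq_sqrt hupos.le
    have hqne : Real.sqrt (C * (A + D) + D * (A - C) * Γ x 0 ^ 2) ≠ 0 :=
      ne_of_gt (Real.sqrt_pos.2 hupos)
    -- rewrite the target function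
    have hgoal : (fun t => (σ * Real.sqrt (D * (A - C)) * F t + D * G t - d * C) *
        Real.exp (σ * (1 - ε) * Real.sqrt (D * (A - C)) * Φ t))
        = (fun t => (σ * Real.sqrt (D * (A - C)) * (Real.sqrt (C * (A + D) + D * (A - C) * Γ t 0 ^ 2) * Ω t 0)
            + D * ((A - C) * Ω t 0 * Γ t 0 + C * (Ω t 0 * Γ t 0 + Ω t 1 * Γ t 1 + Ω t 2 * Γ t 2)) - d * C) *
          Real.exp (σ * (1 - ε) * Real.sqrt (D * (A - C)) * Φ t)) := by
      funext t
      rw [hF t, hG t, hρ (Γ t 0)]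
      simp only [dotProduct, Fin.sum_univ_three]
    rw [hgoal]
    -- build the derivative
    have hsq := (Real.hasDerivAt_sqrt (ne_of_gt hupos)).comp x
      ((hasDerivAt_const x (C * (A + D))).add ((hg0.pow 2).const_mul (D * (A - C))))
    have hFd := (hsq.mul (hWi 0)).const_mul (σ * Real.sqrt (D * (A - C)))
    have hGd := ((((hWi 0).const_mul (A - C)).mul hg0).add
      (((((hWi 0).mul hg0).add ((hWi 1).mul hg1)).add ((hWi 2).mul hg2)).const_mul C)).const_mul D
    have hΦx : HasDerivAt Φ (ε * (Γ x 1 * Ω x 2 - Γ x 2 * Ω x 1) /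
        (ε * Real.sqrt (C * (A + D) + D * (A - C) * Γ x 0 ^ 2))) x := by
      have h := hΦ x; rw [hρ (Γ x 0)] at h; simpa [cross_apply] using h
    have hexp := (hΦx.const_mul (σ * (1 - ε) * Real.sqrt (D * (A - C)))).exp
    have hH' := ((hFd.add hGd).sub (hasDerivAt_const x (d * C))).mul hexp
    refine hH'.congr_deriv (Eq.symm ?_)
    symm
    simp only [Function.comp_apply, Pi.add_apply, Pi.mul_apply, Pi.sub_apply, Pi.pow_apply]
    set q := Real.sqrt (C * (A + D) + D * (A - C) * Γ x 0 ^ 2) with hqdef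
    set k := Real.sqrt (D * (A - C)) with hkdef
    set Ex := Real.exp (σ * (1 - ε) * k * Φ x) with hExdef
    have S : C * (Γ x 0 * deriv (fun t => Ω t 0) x + Γ x 1 * deriv (fun t => Ω t 1) x + Γ x 2 * deriv (fun t => Ω t 2) x)
        + (A - C) * (deriv (fun t => Ω t 0) x * Γ x 0 + Ω x 0 * (Γ x 1 * Ω x 2 - Γ x 2 * Ω x 1)) = 0 := by
      linear_combination (Γ x 0) * E0 + (Γ x 1) * E1 + (Γ x 2) * E2 +
        D * (Γ x 0 * deriv (fun t => Ω t 0) x + Γ x 1 * deriv (fun t => Ω t 1) x + Γ x 2 * deriv (fun t => Ω t 2) x) * hu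
    have R1 : q ^ 2 * deriv (fun t => Ω t 0) x
        + D * (A - C) * Γ x 0 * Ω x 0 * (Γ x 1 * Ω x 2 - Γ x 2 * Ω x 1)
        - C * (1 - ε) * (d - D * (Γ x 0 * Ω x 0 + Γ x 1 * Ω x 1 + Γ x 2 * Ω x 2)) * (Γ x 1 * Ω x 2 - Γ x 2 * Ω x 1) = 0 := by
      linear_combination C * E0 + D * (Γ x 0) * S + (deriv (fun t => Ω t 0) x) * hq2
    have K : σ * k * (ε ^ 2 * (D * (A - C)) * Γ x 0 * (Γ x 1 * Ω x 2 - Γ x 2 * Ω x 1) * Ω x 0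
          + ε * q ^ 2 * deriv (fun t => Ω t 0) x)
        + ε * q * D *
            ((A - C) * (deriv (fun t => Ω t 0) x * Γ x 0 + ε * Ω x 0 * (Γ x 1 * Ω x 2 - Γ x 2 * Ω x 1))
              + C * (Γ x 0 * deriv (fun t => Ω t 0) x + Γ x 1 * deriv (fun t => Ω t 1) x + Γ x 2 * deriv (fun t => Ω t 2) x))
        + ε * σ * (1 - ε) * k * (Γ x 1 * Ω x 2 - Γ x 2 * Ω x 1) *
            (σ * k * (q * Ω x 0)
              + D * ((A - C) * Ω x 0 * Γ x 0 + C * (Ω x 0 * Γ x 0 + Ω x 1 * Γ x 1 + Ω x 2 * Γ x 2)) - d * C) = 0 := by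
      linear_combination (σ * k * ε) * R1
        + (ε * q * D) * S
        + (ε * (1 - ε) * q * Ω x 0 * (Γ x 1 * Ω x 2 - Γ x 2 * Ω x 1) * k ^ 2) * hσ2
        + (ε * (1 - ε) * q * Ω x 0 * (Γ x 1 * Ω x 2 - Γ x 2 * Ω x 1)) * hk2
    have h1 : Ex *
        ((ε * q)⁻¹ * (σ * k * (ε ^ 2 * (D * (A - C)) * Γ x 0 * (Γ x 1 * Ω x 2 - Γ x 2 * Ω x 1) * Ω x 0
          + ε * q ^ 2 * deriv (fun t => Ω t 0) x)
        + ε * q * D *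
            ((A - C) * (deriv (fun t => Ω t 0) x * Γ x 0 + ε * Ω x 0 * (Γ x 1 * Ω x 2 - Γ x 2 * Ω x 1))
              + C * (Γ x 0 * deriv (fun t => Ω t 0) x + Γ x 1 * deriv (fun t => Ω t 1) x + Γ x 2 * deriv (fun t => Ω t 2) x))
        + ε * σ * (1 - ε) * k * (Γ x 1 * Ω x 2 - Γ x 2 * Ω x 1) *
            (σ * k * (q * Ω x 0)
              + D * ((A - C) * Ω x 0 * Γ x 0 + C * (Ω x 0 * Γ x 0 + Ω x 1 * Γ x 1 + Ω x 2 * Γ x 2)) - d * C))) = 0 := by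
      rw [K]; ring
    refine Eq.trans ?_ h1
    field_simp [hqne, hε]
    ring
  intro s t
  exact is_const_of_deriv_eq_zero (fun x => (key x).differentiableAt) (fun x => (key x).deriv) s t
end

section
/- Fix A, C, D > 0 and d ∈ ℝ, set 𝕀 = diag(A, C, C) and 𝐈(Γ) = 𝕀 + D·E − D·Γ Γᵀ. For any Ω ∈ ℝ³ and unit vector Γ ∈ ℝ³, put 𝐌 = 𝐈(Γ)Ω + dΓ, F² = (C(A+D) + D(A−C)Γ₁²) Ω₁², and G = (A − C) Ω₁ Γ₁ + C ⟨Ω, Γ⟩. Then the algebraic identity (D G − d C)² − D(A − C) F² = C D (C + D) ⟨𝐈(Γ)Ω, Ω⟩ − C D ⟨𝐌, 𝐌⟩ + C (C + D) d² holds; that is, the product F₃⁺ F₃⁻ of the two nonalgebraic integrals is an affine combination of the energy integral F₁ = ½⟨𝐈(Γ)Ω, Ω⟩ and the integral F₂ = ⟨𝐌, 𝐌⟩. -/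
open Matrix

/-- In the symmetric case `B = C` of the spherical ball bearing
problem, the product `F₃⁺ F₃⁻ = (DG − dC)² − D(A−C)F²` of the two nonalgebraic
integrals is an affine combination of the integrals `F₁ = ½⟨𝐈(Γ)Ω, Ω⟩` and
`F₂ = ⟨𝐌, 𝐌⟩`:
`(DG − dC)² − D(A−C)F² = CD(C+D)⟨𝐈(Γ)Ω, Ω⟩ − CD⟨𝐌, 𝐌⟩ + C(C+D)d²`. -/
theorem spherical_ball_bearing_product_of_integrals
    (A C D : ℝ) (hA : 0 < A) (hC : 0 < C) (hD : 0 < D) (d : ℝ)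
    (Ω Γ : Fin 3 → ℝ) (hΓ : Γ ⬝ᵥ Γ = 1)
    (M : Fin 3 → ℝ) (hM : M = (modInertia A C C D Γ).mulVec Ω + d • Γ)
    (Fsq : ℝ) (hFsq : Fsq = (C * (A + D) + D * (A - C) * Γ 0 ^ 2) * Ω 0 ^ 2)
    (G : ℝ) (hG : G = (A - C) * Ω 0 * Γ 0 + C * (Ω ⬝ᵥ Γ)) :
    (D * G - d * C) ^ 2 - D * (A - C) * Fsq =
      C * D * (C + D) * ((modInertia A C C D Γ).mulVec Ω ⬝ᵥ Ω)
        - C * D * (M ⬝ᵥ M) + C * (C + D) * d ^ 2 := by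
  subst hM hFsq hG
  simp only [dotProduct, Fin.sum_univ_three] at hΓ ⊢
  simp only [modInertia, mulVec, dotProduct, Fin.sum_univ_three, Matrix.sub_apply,
    Matrix.add_apply, Matrix.smul_apply, Matrix.one_apply, vecMulVec_apply,
    Pi.add_apply, Pi.smul_apply, smul_eq_mul, Matrix.diagonal,
    Matrix.of_apply, Matrix.cons_val_zero, Matrix.cons_val_one, Matrix.head_cons,
    Matrix.cons_val_two, Matrix.tail_cons]
  simp only [Fin.reduceEq, if_true, if_false, reduceIte]
  norm_num
  linear_combination (C * D * (d - D * (Ω 0 * Γ 0 + Ω 1 * Γ 1 + Ω 2 * Γ 2))^2) * hΓ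
end

section
/- Fix m, δ, I > 0. Let v = (v_x, v_y, v_φ) : ℝ → ℝ³ and n = (N₁, N₂, M) : ℝ → ℝ³ be differentiable curves satisfying the reduced planar ball bearing equations 𝕀(n(t)) v̇(t) = 𝐦(v(t), n(t)) and ṅ(t) = 𝕁(n(t)) v(t) for all t. Then the functions f₁ = (m + δ) v_x − v_φ N₂ and f₂ = (m + δ) v_y + v_φ N₁ are constant in t. -/
open Matrix

/-- The matrix `𝕀(n)` of the reduced planar ball bearing problem, for
`n = (N₁, N₂, M)`. -/
noncomputable def planarInertia (m δ I : ℝ) (n : Fin 3 → ℝ) : Matrix (Fin 3) (Fin 3) ℝ :=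
  !![m + δ, 0, -n 1; 0, m + δ, n 0; -n 1, n 0, I + n 2]

/-- The matrix `𝕁(n)` of the reduced planar ball bearing problem. -/
noncomputable def planarJ (δ : ℝ) (n : Fin 3 → ℝ) : Matrix (Fin 3) (Fin 3) ℝ :=
  (-(1 / 2 : ℝ)) • !![δ, 0, n 1; 0, δ, -n 0; 2 * n 0, 2 * n 1, 0]

/-- The right-hand side `𝐦(v, n)` of the reduced planar ball bearing problem, for
`v = (v_x, v_y, v_φ)` and `n = (N₁, N₂, M)`. -/
noncomputable def planarRHS (δ : ℝ) (v n : Fin 3 → ℝ) : Fin 3 → ℝ :=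
  (1 / 2 : ℝ) • ![n 0 * v 2 ^ 2 - δ * v 2 * v 1,
    n 1 * v 2 ^ 2 + δ * v 2 * v 0,
    v 2 * (n 0 * v 0 + n 1 * v 1)]

/-- Along the reduced planar ball bearing equations
`𝕀(n) v̇ = 𝐦(v, n)`, `ṅ = 𝕁(n) v`, the functions `f₁ = (m + δ) v_x − v_φ N₂` and
`f₂ = (m + δ) v_y + v_φ N₁` are first integrals. -/
theorem planar_ball_bearing_linear_integrals
    (m δ I : ℝ) (hm : 0 < m) (hδ : 0 < δ) (hI : 0 < I)
    (v v' n : ℝ → Fin 3 → ℝ)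
    (hv : ∀ t : ℝ, HasDerivAt v (v' t) t)
    (heq : ∀ t : ℝ, (planarInertia m δ I (n t)).mulVec (v' t) = planarRHS δ (v t) (n t))
    (hn : ∀ t : ℝ, HasDerivAt n ((planarJ δ (n t)).mulVec (v t)) t) :
    (∀ s t : ℝ, (m + δ) * v s 0 - v s 2 * n s 1 = (m + δ) * v t 0 - v t 2 * n t 1) ∧
    (∀ s t : ℝ, (m + δ) * v s 1 + v s 2 * n s 0 = (m + δ) * v t 1 + v t 2 * n t 0) := by

  -- component derivatives
  have hvC : ∀ (i : Fin 3) (t : ℝ), HasDerivAt (fun s => v s i) (v' t i) t := by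
    intro i t
    exact (hasDerivAt_pi.mp (hv t)) i
  have hnC : ∀ (i : Fin 3) (t : ℝ),
      HasDerivAt (fun s => n s i) (((planarJ δ (n t)).mulVec (v t)) i) t := by
    intro i t
    exact (hasDerivAt_pi.mp (hn t)) i
  -- scalar equations from heq
  have heq0 : ∀ t : ℝ, (m + δ) * v' t 0 - n t 1 * v' t 2
      = (1/2) * (n t 0 * v t 2 ^ 2 - δ * v t 2 * v t 1) := by
    intro t
    have h := congrFun (heq t) 0
    simp [planarInertia, planarRHS, Matrix.mulVec, dotProduct,
      Fin.sum_univ_three] at h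
    linarith [h]
  have heq1 : ∀ t : ℝ, (m + δ) * v' t 1 + n t 0 * v' t 2
      = (1/2) * (n t 1 * v t 2 ^ 2 + δ * v t 2 * v t 0) := by
    intro t
    have h := congrFun (heq t) 1
    simp [planarInertia, planarRHS, Matrix.mulVec, dotProduct,
      Fin.sum_univ_three] at h
    linarith [h]
  -- n' components
  have hn0 : ∀ t : ℝ, ((planarJ δ (n t)).mulVec (v t)) 0
      = -(1/2) * (δ * v t 0 + n t 1 * v t 2) := by
    intro t
    simp [planarJ, Matrix.mulVec, dotProduct, Fin.sum_univ_three]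
    ring
  have hn1 : ∀ t : ℝ, ((planarJ δ (n t)).mulVec (v t)) 1
      = -(1/2) * (δ * v t 1 - n t 0 * v t 2) := by
    intro t
    simp [planarJ, Matrix.mulVec, dotProduct, Fin.sum_univ_three]
    ring
  -- derivatives of the integrals are zero
  have hf1 : ∀ t : ℝ,
      HasDerivAt (fun s => (m + δ) * v s 0 - v s 2 * n s 1) 0 t := by
    intro t
    have h := (((hvC 0 t).const_mul (m + δ)).sub
      ((hvC 2 t).mul (hnC 1 t)))
    refine h.congr_deriv ?_
    rw [hn1 t]
    have := heq0 t
    ring_nf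
    ring_nf at this
    linarith
  have hf2 : ∀ t : ℝ,
      HasDerivAt (fun s => (m + δ) * v s 1 + v s 2 * n s 0) 0 t := by
    intro t
    have h := (((hvC 1 t).const_mul (m + δ)).add
      ((hvC 2 t).mul (hnC 0 t)))
    refine h.congr_deriv ?_
    rw [hn0 t]
    have := heq1 t
    ring_nf
    ring_nf at this
    linarith
  constructor
  · intro s t
    exact is_const_of_deriv_eq_zero (fun x => (hf1 x).differentiableAt)
      (fun x => (hf1 x).deriv) s t
  · intro s t
    exact is_const_of_deriv_eq_zero (fun x => (hf2 x).differentiableAt)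
      (fun x => (hf2 x).deriv) s t
end

section
/- Fix m, δ, I > 0. Let v = (v_x, v_y, v_φ) : ℝ → ℝ³ and n = (N₁, N₂, M) : ℝ → ℝ³ be differentiable curves satisfying the reduced planar ball bearing equations 𝕀(n(t)) v̇(t) = 𝐦(v(t), n(t)) and ṅ(t) = 𝕁(n(t)) v(t) for all t. Then the functions f₃ = δ M − (N₁² + N₂²) and the energy f₄ = ½ (I + M) v_φ² + ½ (m + δ)(v_x² + v_y²) + v_φ (N₁ v_y − N₂ v_x) are constant in t. -/
open Matrix


/-- Along the reduced planar ball bearing equations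
`𝕀(n) v̇ = 𝐦(v, n)`, `ṅ = 𝕁(n) v`, the function `f₃ = δ M − (N₁² + N₂²)` and the
energy `f₄ = ½ (I + M) v_φ² + ½ (m + δ)(v_x² + v_y²) + v_φ (N₁ v_y − N₂ v_x)` are
first integrals. -/
theorem planar_ball_bearing_geometric_and_energy_integrals
    (m δ I : ℝ) (hm : 0 < m) (hδ : 0 < δ) (hI : 0 < I)
    (v v' n : ℝ → Fin 3 → ℝ)
    (hv : ∀ t : ℝ, HasDerivAt v (v' t) t)
    (heq : ∀ t : ℝ, (planarInertia m δ I (n t)).mulVec (v' t) = planarRHS δ (v t) (n t))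
    (hn : ∀ t : ℝ, HasDerivAt n ((planarJ δ (n t)).mulVec (v t)) t) :
    (∀ s t : ℝ, δ * n s 2 - (n s 0 ^ 2 + n s 1 ^ 2) = δ * n t 2 - (n t 0 ^ 2 + n t 1 ^ 2)) ∧
    (∀ s t : ℝ,
      (1 / 2) * (I + n s 2) * v s 2 ^ 2 + (1 / 2) * (m + δ) * (v s 0 ^ 2 + v s 1 ^ 2)
          + v s 2 * (n s 0 * v s 1 - n s 1 * v s 0) =
        (1 / 2) * (I + n t 2) * v t 2 ^ 2 + (1 / 2) * (m + δ) * (v t 0 ^ 2 + v t 1 ^ 2)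
          + v t 2 * (n t 0 * v t 1 - n t 1 * v t 0)) := by
  -- explicit value of 𝕁(n) v
  have hJ : ∀ t : ℝ, (planarJ δ (n t)).mulVec (v t) =
      ![-(1 / 2) * (δ * v t 0 + n t 1 * v t 2),
        -(1 / 2) * (δ * v t 1 - n t 0 * v t 2),
        -(n t 0 * v t 0 + n t 1 * v t 1)] := by
    intro t
    funext i
    fin_cases i <;>
      simp [planarJ, Matrix.mulVec, dotProduct, Fin.sum_univ_three] <;> ring
  have hn0 : ∀ t : ℝ, HasDerivAt (fun t => n t 0)
      (-(1 / 2) * (δ * v t 0 + n t 1 * v t 2)) t := fun t => by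
    have h := hasDerivAt_pi.mp (hJ t ▸ hn t) 0
    exact h
  have hn1 : ∀ t : ℝ, HasDerivAt (fun t => n t 1)
      (-(1 / 2) * (δ * v t 1 - n t 0 * v t 2)) t := fun t => by
    have h := hasDerivAt_pi.mp (hJ t ▸ hn t) 1
    exact h
  have hn2 : ∀ t : ℝ, HasDerivAt (fun t => n t 2)
      (-(n t 0 * v t 0 + n t 1 * v t 1)) t := fun t => by
    have h := hasDerivAt_pi.mp (hJ t ▸ hn t) 2
    exact h
  have hv0 : ∀ t : ℝ, HasDerivAt (fun t => v t 0) (v' t 0) t := fun t =>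
    hasDerivAt_pi.mp (hv t) 0
  have hv1 : ∀ t : ℝ, HasDerivAt (fun t => v t 1) (v' t 1) t := fun t =>
    hasDerivAt_pi.mp (hv t) 1
  have hv2 : ∀ t : ℝ, HasDerivAt (fun t => v t 2) (v' t 2) t := fun t =>
    hasDerivAt_pi.mp (hv t) 2
  -- scalar equations of motion
  have e0 : ∀ t : ℝ, (m + δ) * v' t 0 + -n t 1 * v' t 2 =
      (1 / 2) * (n t 0 * v t 2 ^ 2 - δ * v t 2 * v t 1) := by
    intro t
    have h := congrFun (heq t) 0
    simpa [planarInertia, planarRHS, Matrix.mulVec, dotProduct,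
      Fin.sum_univ_three] using h
  have e1 : ∀ t : ℝ, (m + δ) * v' t 1 + n t 0 * v' t 2 =
      (1 / 2) * (n t 1 * v t 2 ^ 2 + δ * v t 2 * v t 0) := by
    intro t
    have h := congrFun (heq t) 1
    simpa [planarInertia, planarRHS, Matrix.mulVec, dotProduct,
      Fin.sum_univ_three] using h
  have e2 : ∀ t : ℝ, -n t 1 * v' t 0 + n t 0 * v' t 1 + (I + n t 2) * v' t 2 =
      (1 / 2) * (v t 2 * (n t 0 * v t 0 + n t 1 * v t 1)) := by
    intro t
    have h := congrFun (heq t) 2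
    simpa [planarInertia, planarRHS, Matrix.mulVec, dotProduct,
      Fin.sum_univ_three] using h
  constructor
  · -- f₃
    have key : ∀ t : ℝ,
        HasDerivAt (fun t => δ * n t 2 - (n t 0 ^ 2 + n t 1 ^ 2)) 0 t := by
      intro t
      have h := ((hn2 t).const_mul δ).sub
        ((((hn0 t).pow 2)).add (((hn1 t).pow 2)))
      refine h.congr_deriv ?_
      push_cast
      ring
    exact is_const_of_deriv_eq_zero (fun x => (key x).differentiableAt)
      (fun x => (key x).deriv)
  · -- f₄ (energy)
    have key : ∀ t : ℝ,
        HasDerivAt (fun t =>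
          (1 / 2) * (I + n t 2) * v t 2 ^ 2 + (1 / 2) * (m + δ) * (v t 0 ^ 2 + v t 1 ^ 2)
            + v t 2 * (n t 0 * v t 1 - n t 1 * v t 0)) 0 t := by
      intro t
      have h1 := (((hasDerivAt_const t I).add (hn2 t)).const_mul (1 / 2 : ℝ)).mul
        ((hv2 t).pow 2)
      have h2 := (((hv0 t).pow 2).add ((hv1 t).pow 2)).const_mul ((1 / 2 : ℝ) * (m + δ))
      have h3 := (hv2 t).mul (((hn0 t).mul (hv1 t)).sub ((hn1 t).mul (hv0 t)))
      have h := (h1.add h2).add h3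
      refine h.congr_deriv ?_
      push_cast
      simp only [Pi.add_apply, Pi.mul_apply, Pi.sub_apply, Pi.pow_apply]
      linear_combination (v t 0) * e0 t + (v t 1) * e1 t + (v t 2) * e2 t
    exact is_const_of_deriv_eq_zero (fun x => (key x).differentiableAt)
      (fun x => (key x).deriv)
end

section
/- Fix m, δ, I > 0 and consider the open set Q = {(v, n) ∈ ℝ³ × ℝ³ : δ M > N₁² + N₂²}, where n = (N₁, N₂, M). Then on Q one has det 𝕀(n) = (m+δ)((m+δ)I + mM + (δM − (N₁² + N₂²))) > 0, the matrix 𝕀(n) is invertible, and the vector field X(v, n) = (𝕀(n)⁻¹ 𝐦(v, n), 𝕁(n) v) on Q ⊂ ℝ⁶ satisfies the divergence identity div(√(det 𝕀(n)) · X) = 0 on Q (divergence taken with respect to the six coordinates (v_x, v_y, v_φ, N₁, N₂, M)). Hence the reduced planar ball bearing system possesses the invariant measure √(det 𝕀) dv_x ∧ dv_y ∧ dv_φ ∧ dN₁ ∧ dN₂ ∧ dM. -/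
open Matrix

/-- The reduced planar ball bearing vector field
`X(v, n) = (𝕀(n)⁻¹ 𝐦(v, n), 𝕁(n) v)` on `ℝ³ × ℝ³`. -/
noncomputable def planarField (m δ I : ℝ) (p : (Fin 3 → ℝ) × (Fin 3 → ℝ)) :
    (Fin 3 → ℝ) × (Fin 3 → ℝ) :=
  ((planarInertia m δ I p.2)⁻¹.mulVec (planarRHS δ p.1 p.2),
    (planarJ δ p.2).mulVec p.1)

/-- The divergence of a vector field on `ℝ³ × ℝ³ ≅ ℝ⁶`: the sum of the partial
derivatives of its six components with respect to the six coordinates. -/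
noncomputable def divergence6 (Y : (Fin 3 → ℝ) × (Fin 3 → ℝ) → (Fin 3 → ℝ) × (Fin 3 → ℝ))
    (p : (Fin 3 → ℝ) × (Fin 3 → ℝ)) : ℝ :=
  (∑ i : Fin 3, (fderiv ℝ Y p (Pi.single i 1, 0)).1 i)
    + ∑ i : Fin 3, (fderiv ℝ Y p (0, Pi.single i 1)).2 i

/-! ### Auxiliary material -/

/-- The determinant polynomial of the inertia matrix. -/
noncomputable def bbD (m δ I : ℝ) (n : Fin 3 → ℝ) : ℝ :=
  (m + δ) * ((m + δ) * I + (m + δ) * n 2 - n 0 ^ 2 - n 1 ^ 2)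

/-- The adjugate of the inertia matrix. -/
noncomputable def bbAdj (m δ I : ℝ) (n : Fin 3 → ℝ) : Matrix (Fin 3) (Fin 3) ℝ :=
  !![(m + δ) * (I + n 2) - n 0 ^ 2, -(n 1 * n 0), (m + δ) * n 1;
     -(n 1 * n 0), (m + δ) * (I + n 2) - n 1 ^ 2, -((m + δ) * n 0);
     (m + δ) * n 1, -((m + δ) * n 0), (m + δ) ^ 2]

/-- Explicit form of the rescaled vector field `√(det 𝕀) • X`. -/
noncomputable def bbY (m δ I : ℝ) (q : (Fin 3 → ℝ) × (Fin 3 → ℝ)) :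
    (Fin 3 → ℝ) × (Fin 3 → ℝ) :=
  (![(Real.sqrt (bbD m δ I q.2))⁻¹ * ((bbAdj m δ I q.2).mulVec (planarRHS δ q.1 q.2) 0),
     (Real.sqrt (bbD m δ I q.2))⁻¹ * ((bbAdj m δ I q.2).mulVec (planarRHS δ q.1 q.2) 1),
     (Real.sqrt (bbD m δ I q.2))⁻¹ * ((bbAdj m δ I q.2).mulVec (planarRHS δ q.1 q.2) 2)],
   ![Real.sqrt (bbD m δ I q.2) * (-(1 / 2 : ℝ) * (δ * q.1 0 + q.2 1 * q.1 2)),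
     Real.sqrt (bbD m δ I q.2) * (-(1 / 2 : ℝ) * (δ * q.1 1 - q.2 0 * q.1 2)),
     Real.sqrt (bbD m δ I q.2) * (-(q.2 0 * q.1 0 + q.2 1 * q.1 1))])

lemma bb_det (m δ I : ℝ) (n : Fin 3 → ℝ) :
    (planarInertia m δ I n).det = bbD m δ I n := by
  simp [planarInertia, Matrix.det_fin_three, bbD]; ring

lemma bbD_pos {m δ I : ℝ} (hm : 0 < m) (hδ : 0 < δ) (hI : 0 < I) {n : Fin 3 → ℝ}
    (h : n 0 ^ 2 + n 1 ^ 2 < δ * n 2) : 0 < bbD m δ I n := by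
  have h1 : 0 < δ * n 2 := lt_of_le_of_lt (by positivity) h
  have hM : 0 < n 2 := by nlinarith
  unfold bbD
  nlinarith [mul_pos (add_pos hm hδ) (sub_pos.2 h), mul_pos (mul_pos (add_pos hm hδ) hm) hM,
    mul_pos (mul_pos (add_pos hm hδ) (add_pos hm hδ)) hI]

lemma bb_mul_adj (m δ I : ℝ) (n : Fin 3 → ℝ) :
    planarInertia m δ I n * bbAdj m δ I n = bbD m δ I n • (1 : Matrix (Fin 3) (Fin 3) ℝ) := by
  ext i j
  fin_cases i <;> fin_cases j <;>
    simp [planarInertia, bbAdj, bbD, Matrix.mul_apply, Fin.sum_univ_three, Matrix.one_apply] <;>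
    ring

lemma bb_inv (m δ I : ℝ) (n : Fin 3 → ℝ) (hD : bbD m δ I n ≠ 0) :
    (planarInertia m δ I n)⁻¹ = (bbD m δ I n)⁻¹ • bbAdj m δ I n := by
  apply Matrix.inv_eq_right_inv
  rw [Matrix.mul_smul, bb_mul_adj, smul_smul, inv_mul_cancel₀ hD, one_smul]

lemma bb_hasDerivAt_poly (f : ℝ → ℝ) (c0 c1 c2 : ℝ)
    (h : ∀ t, f t = c0 + c1 * t + c2 * t ^ 2) : HasDerivAt f c1 0 := by
  have h1 : HasDerivAt (fun t : ℝ => c0 + c1 * t + c2 * t ^ 2) c1 0 := by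
    exact ((((hasDerivAt_id (0 : ℝ)).const_mul c1).const_add c0).add
      ((hasDerivAt_pow 2 (0 : ℝ)).const_mul c2)).congr_deriv (by simp)
  have hf : f = fun t : ℝ => c0 + c1 * t + c2 * t ^ 2 := funext h
  rw [hf]; exact h1

lemma bb_hasDerivAt_sqrt (f : ℝ → ℝ) (d0 d1 d2 k : ℝ) (hd0 : 0 < d0)
    (h : ∀ t, f t = Real.sqrt (d0 + d1 * t + d2 * t ^ 2) * k) :
    HasDerivAt f (d1 / (2 * Real.sqrt d0) * k) 0 := by
  have h1 : HasDerivAt (fun t : ℝ => d0 + d1 * t + d2 * t ^ 2) d1 0 :=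
    bb_hasDerivAt_poly _ d0 d1 d2 (fun t => rfl)
  have h2 := (h1.sqrt (by simpa using hd0.ne')).mul_const k
  have hf : f = fun t : ℝ => Real.sqrt (d0 + d1 * t + d2 * t ^ 2) * k := funext h
  rw [hf]; simpa using h2

lemma bb_fderiv_clm (π : ((Fin 3 → ℝ) × (Fin 3 → ℝ)) →L[ℝ] ℝ)
    {Y : (Fin 3 → ℝ) × (Fin 3 → ℝ) → (Fin 3 → ℝ) × (Fin 3 → ℝ)}
    {p u : (Fin 3 → ℝ) × (Fin 3 → ℝ)} (hY : DifferentiableAt ℝ Y p) {c : ℝ}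
    (h : HasDerivAt (fun t : ℝ => π (Y (p + t • u))) c 0) :
    π (fderiv ℝ Y p u) = c := by
  have hd : DifferentiableAt ℝ (fun q => π (Y q)) p := π.differentiableAt.comp p hY
  have hline : HasDerivAt (fun t : ℝ => p + t • u) u 0 := by
    simpa using ((hasDerivAt_id (0 : ℝ)).smul_const u).const_add p
  have h3 : HasFDerivAt (fun q => π (Y q)) (fderiv ℝ (fun q => π (Y q)) p)
      (p + (0 : ℝ) • u) := by
    simpa using hd.hasFDerivAt
  have h2 : HasDerivAt (fun t : ℝ => π (Y (p + t • u)))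
      (fderiv ℝ (fun q => π (Y q)) p u) 0 := by
    have := h3.comp_hasDerivAt 0 hline
    exact this
  have h4 : fderiv ℝ (fun q => π (Y q)) p u = c := h2.unique h
  have h5 : fderiv ℝ (fun q => π (Y q)) p = π.comp (fderiv ℝ Y p) := by
    have := fderiv_comp (𝕜 := ℝ) p π.differentiableAt hY
    rwa [π.fderiv] at this
  rw [h5] at h4
  exact h4

lemma bb_fderiv_fst {Y : (Fin 3 → ℝ) × (Fin 3 → ℝ) → (Fin 3 → ℝ) × (Fin 3 → ℝ)}
    {p u : (Fin 3 → ℝ) × (Fin 3 → ℝ)} (hY : DifferentiableAt ℝ Y p) (i : Fin 3) {c : ℝ}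
    (h : HasDerivAt (fun t : ℝ => (Y (p + t • u)).1 i) c 0) :
    (fderiv ℝ Y p u).1 i = c :=
  bb_fderiv_clm ((ContinuousLinearMap.proj i).comp
    (ContinuousLinearMap.fst ℝ (Fin 3 → ℝ) (Fin 3 → ℝ))) hY h

lemma bb_fderiv_snd {Y : (Fin 3 → ℝ) × (Fin 3 → ℝ) → (Fin 3 → ℝ) × (Fin 3 → ℝ)}
    {p u : (Fin 3 → ℝ) × (Fin 3 → ℝ)} (hY : DifferentiableAt ℝ Y p) (i : Fin 3) {c : ℝ}
    (h : HasDerivAt (fun t : ℝ => (Y (p + t • u)).2 i) c 0) :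
    (fderiv ℝ Y p u).2 i = c :=
  bb_fderiv_clm ((ContinuousLinearMap.proj i).comp
    (ContinuousLinearMap.snd ℝ (Fin 3 → ℝ) (Fin 3 → ℝ))) hY h

set_option maxHeartbeats 4000000 in
/-- On the physical phase space
`Q = {(v, n) : δ M > N₁² + N₂²}` of the reduced planar ball bearing problem, one has
`det 𝕀(n) = (m+δ)((m+δ)I + mM + (δM − (N₁² + N₂²))) > 0`, the matrix `𝕀(n)` is
invertible, and the vector field `X(v, n) = (𝕀(n)⁻¹ 𝐦(v, n), 𝕁(n) v)` satisfies
`div(√(det 𝕀(n)) · X) = 0` on `Q`: the system has the invariant measure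
`√(det 𝕀) dv_x ∧ dv_y ∧ dv_φ ∧ dN₁ ∧ dN₂ ∧ dM`. -/
theorem planar_ball_bearing_invariant_measure
    (m δ I : ℝ) (hm : 0 < m) (hδ : 0 < δ) (hI : 0 < I) :
    ∀ p : (Fin 3 → ℝ) × (Fin 3 → ℝ),
      δ * p.2 2 > p.2 0 ^ 2 + p.2 1 ^ 2 →
      ((planarInertia m δ I p.2).det =
          (m + δ) * ((m + δ) * I + m * p.2 2 + (δ * p.2 2 - (p.2 0 ^ 2 + p.2 1 ^ 2))) ∧
        0 < (planarInertia m δ I p.2).det ∧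
        IsUnit (planarInertia m δ I p.2) ∧
        divergence6
          (fun q => Real.sqrt ((planarInertia m δ I q.2).det) • planarField m δ I q)
          p = 0) := by
  intro p hp
  have hpD : 0 < bbD m δ I p.2 := bbD_pos hm hδ hI hp
  have hs0 : Real.sqrt (bbD m δ I p.2) ≠ 0 := (Real.sqrt_pos.2 hpD).ne'
  refine ⟨by rw [bb_det]; unfold bbD; ring, by rw [bb_det]; exact hpD,
    (Matrix.isUnit_iff_isUnit_det _).2 (by rw [bb_det]; exact isUnit_iff_ne_zero.2 hpD.ne'), ?_⟩
  -- the divergence identity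
  have hU : IsOpen {q : (Fin 3 → ℝ) × (Fin 3 → ℝ) | q.2 0 ^ 2 + q.2 1 ^ 2 < δ * q.2 2} := by
    apply isOpen_lt <;> fun_prop
  have heq : (fun q => Real.sqrt ((planarInertia m δ I q.2).det) • planarField m δ I q)
      =ᶠ[nhds p] bbY m δ I := by
    filter_upwards [hU.mem_nhds hp] with q hq
    have hqD : 0 < bbD m δ I q.2 := bbD_pos hm hδ hI hq
    have hqs : Real.sqrt (bbD m δ I q.2) ≠ 0 := (Real.sqrt_pos.2 hqD).ne'
    have hmulself : Real.sqrt (bbD m δ I q.2) * Real.sqrt (bbD m δ I q.2) = bbD m δ I q.2 :=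
      Real.mul_self_sqrt hqD.le
    have hsd : Real.sqrt (bbD m δ I q.2) * (bbD m δ I q.2)⁻¹
        = (Real.sqrt (bbD m δ I q.2))⁻¹ := by
      rw [← hmulself]; field_simp
      rw [Real.sqrt_sq (Real.sqrt_nonneg _)]
    show Real.sqrt ((planarInertia m δ I q.2).det) • planarField m δ I q = bbY m δ I q
    rw [bb_det]
    unfold planarField
    rw [bb_inv m δ I q.2 hqD.ne']
    refine Prod.ext ?_ ?_
    · show Real.sqrt (bbD m δ I q.2) •
          ((bbD m δ I q.2)⁻¹ • bbAdj m δ I q.2).mulVec (planarRHS δ q.1 q.2) = _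
      rw [Matrix.smul_mulVec, smul_smul, hsd]
      funext i
      fin_cases i <;> simp [bbY]
    · funext i
      fin_cases i <;>
        · simp [bbY, planarJ, Matrix.mulVec, dotProduct, Fin.sum_univ_three,
            -mul_eq_mul_left_iff]
          ring
  -- differentiability of the explicit field
  have hDd : DifferentiableAt ℝ (fun q : (Fin 3 → ℝ) × (Fin 3 → ℝ) => bbD m δ I q.2) p := by
    unfold bbD; fun_prop
  have hsq : DifferentiableAt ℝ
      (fun q : (Fin 3 → ℝ) × (Fin 3 → ℝ) => Real.sqrt (bbD m δ I q.2)) p :=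
    ((Real.hasDerivAt_sqrt hpD.ne').differentiableAt).comp p hDd
  have hsqi : DifferentiableAt ℝ
      (fun q : (Fin 3 → ℝ) × (Fin 3 → ℝ) => (Real.sqrt (bbD m δ I q.2))⁻¹) p := hsq.inv hs0
  have hA : ∀ i : Fin 3, DifferentiableAt ℝ
      (fun q : (Fin 3 → ℝ) × (Fin 3 → ℝ) =>
        (bbAdj m δ I q.2).mulVec (planarRHS δ q.1 q.2) i) p := by
    intro i
    fin_cases i <;>
      · simp [bbAdj, planarRHS, Matrix.mulVec, dotProduct, Fin.sum_univ_three]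
        fun_prop
  have hY : DifferentiableAt ℝ (bbY m δ I) p := by
    unfold bbY
    refine DifferentiableAt.prodMk (differentiableAt_pi.2 ?_) (differentiableAt_pi.2 ?_) <;>
        intro i <;> fin_cases i
    · exact hsqi.mul (hA 0)
    · exact hsqi.mul (hA 1)
    · exact hsqi.mul (hA 2)
    · exact hsq.mul (by fun_prop)
    · exact hsq.mul (by fun_prop)
    · exact hsq.mul (by fun_prop)
  -- the six partial derivatives
  have e1 : (fderiv ℝ (bbY m δ I) p (Pi.single (0 : Fin 3) 1, 0)).1 0
      = (Real.sqrt (bbD m δ I p.2))⁻¹ * ((1 / 2 : ℝ) * m * p.1 2 * p.2 0 * p.2 1) := by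
    refine bb_fderiv_fst hY 0 (bb_hasDerivAt_poly _
      ((Real.sqrt (bbD m δ I p.2))⁻¹ * ((bbAdj m δ I p.2).mulVec (planarRHS δ p.1 p.2) 0))
      _ 0 fun t => ?_)
    simp [bbY, bbAdj, planarRHS, Matrix.mulVec, dotProduct, Fin.sum_univ_three,
      Pi.single_apply]
    ring
  have e2 : (fderiv ℝ (bbY m δ I) p (Pi.single (1 : Fin 3) 1, 0)).1 1
      = (Real.sqrt (bbD m δ I p.2))⁻¹ * (-(1 / 2 : ℝ) * m * p.1 2 * p.2 0 * p.2 1) := by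
    refine bb_fderiv_fst hY 1 (bb_hasDerivAt_poly _
      ((Real.sqrt (bbD m δ I p.2))⁻¹ * ((bbAdj m δ I p.2).mulVec (planarRHS δ p.1 p.2) 1))
      _ 0 fun t => ?_)
    simp [bbY, bbAdj, planarRHS, Matrix.mulVec, dotProduct, Fin.sum_univ_three,
      Pi.single_apply]
    ring
  have e3 : (fderiv ℝ (bbY m δ I) p (Pi.single (2 : Fin 3) 1, 0)).1 2
      = (Real.sqrt (bbD m δ I p.2))⁻¹ *
        ((1 / 2 : ℝ) * m * (m + δ) * (p.1 0 * p.2 0 + p.1 1 * p.2 1)) := by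
    refine bb_fderiv_fst hY 2 (bb_hasDerivAt_poly _
      ((Real.sqrt (bbD m δ I p.2))⁻¹ * ((bbAdj m δ I p.2).mulVec (planarRHS δ p.1 p.2) 2))
      _ 0 fun t => ?_)
    simp [bbY, bbAdj, planarRHS, Matrix.mulVec, dotProduct, Fin.sum_univ_three,
      Pi.single_apply]
    ring
  have e4 : (fderiv ℝ (bbY m δ I) p ((((0 : Fin 3 → ℝ), Pi.single (0 : Fin 3) (1 : ℝ))) : (Fin 3 → ℝ) × (Fin 3 → ℝ))).2 0
      = (-(2 * (m + δ) * p.2 0)) / (2 * Real.sqrt (bbD m δ I p.2)) *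
        (-(1 / 2 : ℝ) * (δ * p.1 0 + p.2 1 * p.1 2)) := by
    refine bb_fderiv_snd hY 0 (bb_hasDerivAt_sqrt _ (bbD m δ I p.2)
      (-(2 * (m + δ) * p.2 0)) (-(m + δ))
      (-(1 / 2 : ℝ) * (δ * p.1 0 + p.2 1 * p.1 2)) hpD fun t => ?_)
    have harg : bbD m δ I (p.2 + t • (Pi.single (0 : Fin 3) 1 : Fin 3 → ℝ))
        = bbD m δ I p.2 + -(2 * (m + δ) * p.2 0) * t + -(m + δ) * t ^ 2 := by
      simp [bbD, Pi.single_apply]; ring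
    simp [bbY, Pi.single_apply, harg]
  have e5 : (fderiv ℝ (bbY m δ I) p ((((0 : Fin 3 → ℝ), Pi.single (1 : Fin 3) (1 : ℝ))) : (Fin 3 → ℝ) × (Fin 3 → ℝ))).2 1
      = (-(2 * (m + δ) * p.2 1)) / (2 * Real.sqrt (bbD m δ I p.2)) *
        (-(1 / 2 : ℝ) * (δ * p.1 1 - p.2 0 * p.1 2)) := by
    refine bb_fderiv_snd hY 1 (bb_hasDerivAt_sqrt _ (bbD m δ I p.2)
      (-(2 * (m + δ) * p.2 1)) (-(m + δ))
      (-(1 / 2 : ℝ) * (δ * p.1 1 - p.2 0 * p.1 2)) hpD fun t => ?_)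
    have harg : bbD m δ I (p.2 + t • (Pi.single (1 : Fin 3) 1 : Fin 3 → ℝ))
        = bbD m δ I p.2 + -(2 * (m + δ) * p.2 1) * t + -(m + δ) * t ^ 2 := by
      simp [bbD, Pi.single_apply]; ring
    simp [bbY, Pi.single_apply, harg]
  have e6 : (fderiv ℝ (bbY m δ I) p ((((0 : Fin 3 → ℝ), Pi.single (2 : Fin 3) (1 : ℝ))) : (Fin 3 → ℝ) × (Fin 3 → ℝ))).2 2
      = (m + δ) ^ 2 / (2 * Real.sqrt (bbD m δ I p.2)) *
        (-(p.2 0 * p.1 0 + p.2 1 * p.1 1)) := by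
    refine bb_fderiv_snd hY 2 (bb_hasDerivAt_sqrt _ (bbD m δ I p.2)
      ((m + δ) ^ 2) 0
      (-(p.2 0 * p.1 0 + p.2 1 * p.1 1)) hpD fun t => ?_)
    have harg : bbD m δ I (p.2 + t • (Pi.single (2 : Fin 3) 1 : Fin 3 → ℝ))
        = bbD m δ I p.2 + (m + δ) ^ 2 * t + 0 * t ^ 2 := by
      simp [bbD, Pi.single_apply]; ring
    simp [bbY, Pi.single_apply, harg]
  have hfd : fderiv ℝ
      (fun q => Real.sqrt ((planarInertia m δ I q.2).det) • planarField m δ I q) p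
      = fderiv ℝ (bbY m δ I) p := heq.fderiv_eq
  unfold divergence6
  rw [hfd, Fin.sum_univ_three, Fin.sum_univ_three, e1, e2, e3, e4, e5, e6]
  field_simp
  ring
end

section
/- Fix m, δ, I > 0 and d₁, d₂, d₃ ∈ ℝ with Iδ + d₃ > 0, and set Δ(N₁, N₂) = (m+δ)((m+δ)I + (m/δ)(N₁² + N₂²) + (m/δ)d₃ + d₃) (so Δ > 0 everywhere). Let (v_φ, N₁, N₂) : ℝ → ℝ³ be a differentiable curve satisfying the reduced system on the integral level set: v̇_φ = m v_φ (N₁ d₁ + N₂ d₂) / (2Δ(N₁, N₂)), Ṅ₁ = −((m+2δ)/(2(m+δ))) N₂ v_φ − δ d₁/(2(m+δ)), Ṅ₂ = ((m+2δ)/(2(m+δ))) N₁ v_φ − δ d₂/(2(m+δ)). Then the function F = (m(m+δ)/δ) v_φ² (N₁² + N₂²) + ((Iδ + d₃)(m+δ)²/δ) v_φ² is constant along the curve. -/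
set_option maxHeartbeats 2000000 in
/-- On the joint level set `f₁ = d₁`, `f₂ = d₂`, `f₃ = d₃` of the
reduced planar ball bearing problem, the equations close to a three-dimensional
system in `(v_φ, N₁, N₂)`, where `Δ(N₁, N₂) = (m+δ)((m+δ)I + (m/δ)(N₁² + N₂²)
+ (m/δ)d₃ + d₃)`; along its solutions, the modified energy
`F = (m(m+δ)/δ) v_φ² (N₁² + N₂²) + ((Iδ + d₃)(m+δ)²/δ) v_φ²` is a first integral. -/
theorem planar_ball_bearing_reduced_integral
    (m δ I d₁ d₂ d₃ : ℝ) (hm : 0 < m) (hδ : 0 < δ) (hI : 0 < I)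
    (hd₃ : 0 < I * δ + d₃)
    (Δ : ℝ → ℝ → ℝ)
    (hΔ : ∀ N₁ N₂ : ℝ,
      Δ N₁ N₂ = (m + δ) * ((m + δ) * I + (m / δ) * (N₁ ^ 2 + N₂ ^ 2) + (m / δ) * d₃ + d₃))
    (vφ N₁ N₂ : ℝ → ℝ)
    (hvφ : ∀ t : ℝ, HasDerivAt vφ
      (m * vφ t * (N₁ t * d₁ + N₂ t * d₂) / (2 * Δ (N₁ t) (N₂ t))) t)
    (hN₁ : ∀ t : ℝ, HasDerivAt N₁
      (-((m + 2 * δ) / (2 * (m + δ))) * N₂ t * vφ t - δ * d₁ / (2 * (m + δ))) t)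
    (hN₂ : ∀ t : ℝ, HasDerivAt N₂
      (((m + 2 * δ) / (2 * (m + δ))) * N₁ t * vφ t - δ * d₂ / (2 * (m + δ))) t) :
    ∀ s t : ℝ,
      (m * (m + δ) / δ) * vφ s ^ 2 * (N₁ s ^ 2 + N₂ s ^ 2)
          + ((I * δ + d₃) * (m + δ) ^ 2 / δ) * vφ s ^ 2 =
        (m * (m + δ) / δ) * vφ t ^ 2 * (N₁ t ^ 2 + N₂ t ^ 2)
          + ((I * δ + d₃) * (m + δ) ^ 2 / δ) * vφ t ^ 2 := by
  have hmδ : (0:ℝ) < m + δ := by linarith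
  have hΔpos : ∀ a b : ℝ, 0 < Δ a b := by
    intro a b
    rw [hΔ]
    have h1 : (0:ℝ) < (m / δ) * (a ^ 2 + b ^ 2) + ((m + δ) * I + (m / δ) * d₃ + d₃) := by
      have h2 : (m / δ) * d₃ + d₃ = ((m + δ) / δ) * d₃ := by field_simp
      have h3 : (m + δ) * I + ((m + δ) / δ) * d₃ = ((m + δ) / δ) * (I * δ + d₃) := by
        field_simp
      have h4 : (0:ℝ) < ((m + δ) / δ) * (I * δ + d₃) := by positivity
      have h5 : (0:ℝ) ≤ (m / δ) * (a ^ 2 + b ^ 2) := by positivity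
      nlinarith
    nlinarith
  set F : ℝ → ℝ := fun u =>
    (m * (m + δ) / δ) * vφ u ^ 2 * (N₁ u ^ 2 + N₂ u ^ 2)
      + ((I * δ + d₃) * (m + δ) ^ 2 / δ) * vφ u ^ 2 with hF
  have key : ∀ u : ℝ, HasDerivAt F 0 u := by
    intro u
    have h1 := hvφ u
    have h2 := hN₁ u
    have h3 := hN₂ u
    have hv2 := h1.pow 2
    have hN : HasDerivAt (fun x => N₁ x ^ 2 + N₂ x ^ 2)
        ((2 * N₁ u ^ 1 * (-((m + 2 * δ) / (2 * (m + δ))) * N₂ u * vφ u - δ * d₁ / (2 * (m + δ))))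
          + (2 * N₂ u ^ 1 * (((m + 2 * δ) / (2 * (m + δ))) * N₁ u * vφ u - δ * d₂ / (2 * (m + δ))))) u :=
      (h2.pow 2).add (h3.pow 2)
    have hD := ((hv2.const_mul (m * (m + δ) / δ)).mul hN).add
      (hv2.const_mul ((I * δ + d₃) * (m + δ) ^ 2 / δ))
    refine hD.congr_deriv ?_
    symm
    have hΔne : Δ (N₁ u) (N₂ u) ≠ 0 := ne_of_gt (hΔpos _ _)
    have hkey : Δ (N₁ u) (N₂ u) * δ = (m + δ) * (m * (N₁ u ^ 2 + N₂ u ^ 2) + (m + δ) * (I * δ + d₃)) := by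
      rw [hΔ]
      field_simp
      ring
    have hδne : δ ≠ 0 := hδ.ne'
    have hmδne : m + δ ≠ 0 := hmδ.ne'
    field_simp [hδne, hmδne, hΔne]
    simp only [Pi.pow_apply, Nat.cast_ofNat]
    linear_combination (2 * m * vφ u ^ 2 * (N₁ u * d₁ + N₂ u * d₂)) * hkey
  intro s t
  exact is_const_of_deriv_eq_zero (fun u => (key u).differentiableAt)
    (fun u => (key u).deriv) s t
end

section
/- Fix m, δ > 0, d₅ > 0, and k, α, d₆ ∈ ℝ, and define v_φ(A) = d₆ / √(d₅ + (m(m+δ)/δ) A²) for A ∈ ℝ. Let A, θ : ℝ → ℝ be differentiable curves with A(t) > 0 for all t, satisfying the polar-coordinate equations of the reduced planar ball bearing system: Ȧ(t) = −k cos(θ(t) − α) and A(t) θ̇(t) = k sin(θ(t) − α) + ((m+2δ)/(2(m+δ))) A(t) v_φ(A(t)). Then the function k A(t) sin(θ(t) − α) + ((m+2δ) δ d₆ / (2m(m+δ)²)) √(d₅ + (m(m+δ)/δ) A(t)²) is constant in t. This quadrature completes the explicit integration of the planar ball bearing problem. -/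
/-- In the polar coordinates `N₁ = A cos θ`, `N₂ = A sin θ` of the
reduced planar ball bearing problem on a joint level set of the integrals, with
`v_φ(A) = d₆/√(d₅ + (m(m+δ)/δ)A²)`, the equations
`Ȧ = −k cos(θ − α)`, `A θ̇ = k sin(θ − α) + ((m+2δ)/(2(m+δ))) A v_φ(A)` admit the
first integral
`k A sin(θ − α) + ((m+2δ) δ d₆/(2m(m+δ)²)) √(d₅ + (m(m+δ)/δ)A²)`, which completes
the explicit integration of the planar ball bearing problem. -/
theorem planar_ball_bearing_quadrature
    (m δ d₅ k α d₆ : ℝ) (hm : 0 < m) (hδ : 0 < δ) (hd₅ : 0 < d₅)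
    (vφ : ℝ → ℝ)
    (hvφ : ∀ A : ℝ, vφ A = d₆ / Real.sqrt (d₅ + (m * (m + δ) / δ) * A ^ 2))
    (A θ : ℝ → ℝ) (hApos : ∀ t : ℝ, 0 < A t)
    (hA : ∀ t : ℝ, HasDerivAt A (-k * Real.cos (θ t - α)) t)
    (hθ : ∀ t : ℝ, A t * deriv θ t =
      k * Real.sin (θ t - α) + ((m + 2 * δ) / (2 * (m + δ))) * A t * vφ (A t))
    (hθdiff : Differentiable ℝ θ) :
    ∀ s t : ℝ,
      k * A s * Real.sin (θ s - α)
          + ((m + 2 * δ) * δ * d₆ / (2 * m * (m + δ) ^ 2))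
            * Real.sqrt (d₅ + (m * (m + δ) / δ) * A s ^ 2) =
        k * A t * Real.sin (θ t - α)
          + ((m + 2 * δ) * δ * d₆ / (2 * m * (m + δ) ^ 2))
            * Real.sqrt (d₅ + (m * (m + δ) / δ) * A t ^ 2) := by
  have hmδ : (0:ℝ) < m + δ := by linarith
  set c : ℝ := m * (m + δ) / δ with hc_def
  have hc : 0 < c := by positivity
  set C : ℝ := (m + 2 * δ) * δ * d₆ / (2 * m * (m + δ) ^ 2) with hC_def
  set F : ℝ → ℝ := fun t =>
    k * A t * Real.sin (θ t - α) + C * Real.sqrt (d₅ + c * A t ^ 2) with hF_def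
  have key : ∀ t : ℝ, HasDerivAt F 0 t := by
    intro t
    have hS : 0 < d₅ + c * A t ^ 2 := by positivity
    have hsqrt_pos : 0 < Real.sqrt (d₅ + c * A t ^ 2) := Real.sqrt_pos.mpr hS
    have hsq : Real.sqrt (d₅ + c * A t ^ 2) ^ 2 = d₅ + c * A t ^ 2 :=
      Real.sq_sqrt hS.le
    have hθ' : HasDerivAt θ (deriv θ t) t := (hθdiff t).hasDerivAt
    have hsin : HasDerivAt (fun t => Real.sin (θ t - α))
        (Real.cos (θ t - α) * deriv θ t) t := by
      simpa using (hθ'.sub_const α).sin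
    have h1 : HasDerivAt (fun t => k * A t * Real.sin (θ t - α))
        (k * ((-k * Real.cos (θ t - α)) * Real.sin (θ t - α)
          + A t * (Real.cos (θ t - α) * deriv θ t))) t := by
      have := ((hA t).mul hsin).const_mul k
      simpa [mul_assoc] using this
    have hg : HasDerivAt (fun t => d₅ + c * A t ^ 2)
        (c * (2 * A t ^ 1 * (-k * Real.cos (θ t - α)))) t := by
      have := (((hA t).pow 2).const_mul c).const_add d₅
      simpa using this
    have h2 : HasDerivAt (fun t => Real.sqrt (d₅ + c * A t ^ 2))
        ((c * (2 * A t ^ 1 * (-k * Real.cos (θ t - α))))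
          / (2 * Real.sqrt (d₅ + c * A t ^ 2))) t :=
      hg.sqrt hS.ne'
    have htotal := h1.add (h2.const_mul C)
    have hzero :
        k * ((-k * Real.cos (θ t - α)) * Real.sin (θ t - α)
          + A t * (Real.cos (θ t - α) * deriv θ t))
        + C * ((c * (2 * A t ^ 1 * (-k * Real.cos (θ t - α))))
          / (2 * Real.sqrt (d₅ + c * A t ^ 2))) = 0 := by
      have hAθ := hθ t
      have hrewr : A t * (Real.cos (θ t - α) * deriv θ t)
          = Real.cos (θ t - α) * (A t * deriv θ t) := by ring
      rw [hrewr, hAθ, hvφ (A t)]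
      have hs0 : Real.sqrt (d₅ + c * A t ^ 2) ≠ 0 := hsqrt_pos.ne'
      rw [hC_def, hc_def]
      field_simp
      ring
    rw [hzero] at htotal
    exact htotal
  have hconst : ∀ s t : ℝ, F s = F t := by
    have hdiff : Differentiable ℝ F := fun t => (key t).differentiableAt
    have hder : ∀ t, deriv F t = 0 := fun t => (key t).deriv
    intro s t
    exact is_const_of_deriv_eq_zero hdiff hder s t
  intro s t
  have := hconst s t
  simpa [hF_def] using this
end
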